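/- Let a be a distinguished type-C u-symbol. Then: the top of each block of a is a nondisplaced isolated point; the bottom of each block of a that has a bottom is a nondisplaced isolated point; every other isolated point of a contained in a block is displaced, and each block contains an even number (possibly zero) of such displaced isolated points; and every isolated point of a belongs to some block. -/
import Mathlib


open scoped Classical

/-- The map `i` from type-C u-symbols to type-C symbols: the `j`-th entry is
`a j - ⌈j/2⌉`. -/
def mapC (a : ℕ → ℕ) : ℕ → ℕ := fun j => a j - (j + 1) / 2

/-- A type-C u-symbol of rank `n` (with `2m+1` entries, indexed `0,…,2m`). -/
def IsUSymC (n m : ℕ) (a : ℕ → ℕ) : Prop :=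
  1 ≤ a 1 ∧ (∀ i, i + 2 ≤ 2 * m → a i + 2 ≤ a (i + 2)) ∧
    (∑ j ∈ Finset.range (2 * m + 1), a j) = n + 2 * m ^ 2 + m

/-- The u-symbol `a` is distinguished: its entries are nondecreasing. -/
def DistC (m : ℕ) (a : ℕ → ℕ) : Prop := ∀ i, i + 1 ≤ 2 * m → a i ≤ a (i + 1)

/-- `k` is an isolated point of the u-symbol `a`: the `k`-th entry of `i(a)` differs
from every other entry of `i(a)`. -/
def IsIsolC (m : ℕ) (a : ℕ → ℕ) (k : ℕ) : Prop :=
  k ≤ 2 * m ∧ ∀ l ≤ 2 * m, l ≠ k → mapC a l ≠ mapC a k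

/-- `[k,l]` is a ladder of `a`: the entries `a k, …, a l` are `c, c+1, …, c+l-k`,
with `a (k-1) < c - 1` if `k > 0` and `a (l+1) > c + (l-k) + 1` if `l < 2m`. -/
def IsLadderC (m : ℕ) (a : ℕ → ℕ) (k l : ℕ) : Prop :=
  k ≤ l ∧ l ≤ 2 * m ∧ (∀ j, k ≤ j → j ≤ l → a j = a k + (j - k)) ∧
    (0 < k → a (k - 1) + 1 < a k) ∧ (l < 2 * m → a l + 1 < a (l + 1))

/-- `[k,l]` is a staircase of `a`: `l-k+1` is even and the entries `a k, …, a l` are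
`c, c, c+2, c+2, …, c+l-k-1, c+l-k-1`, with `a (k-2) < c - 2` if `k > 1` and
`a (l+2) > c + (l-k) + 1` if `l < 2m - 1`. -/
def IsStairC (m : ℕ) (a : ℕ → ℕ) (k l : ℕ) : Prop :=
  k ≤ l ∧ l ≤ 2 * m ∧ (l - k) % 2 = 1 ∧
    (∀ j, k ≤ j → j ≤ l → a j = a k + 2 * ((j - k) / 2)) ∧
    (1 < k → a (k - 2) + 2 < a k) ∧ (l + 2 ≤ 2 * m → a l + 2 < a (l + 2))

/-- A part is a ladder or a staircase. -/
def IsPartC (m : ℕ) (a : ℕ → ℕ) (k l : ℕ) : Prop :=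
  IsLadderC m a k l ∨ IsStairC m a k l

/-- `K 0, …, K (N-1)` enumerates the isolated points of `a`, ordered so that the
corresponding entries of `i(a)` are strictly increasing. -/
def EnumC (m : ℕ) (a : ℕ → ℕ) (N : ℕ) (K : ℕ → ℕ) : Prop :=
  (∀ t, t < N → IsIsolC m a (K t)) ∧
  (∀ j, IsIsolC m a j → ∃ t, t < N ∧ K t = j) ∧
  (∀ s t, s < t → t < N → mapC a (K s) < mapC a (K t))

/-- `[k,l]` is a block of `a` with a bottom: a union of consecutive parts
`P 0, …, P (r-1)`, where `P 0` and `P (r-1)` are ladders, `P (r-1)` is the unique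
part with even top, and `P 0` is the unique part with odd bottom. -/
def IsBlockBotC (m : ℕ) (a : ℕ → ℕ) (k l : ℕ) : Prop :=
  ∃ (r : ℕ) (P : ℕ → ℕ × ℕ), 0 < r ∧ (P 0).1 = k ∧ (P (r - 1)).2 = l ∧
    (∀ s, s < r → IsPartC m a (P s).1 (P s).2) ∧
    (∀ s, s + 1 < r → (P (s + 1)).1 = (P s).2 + 1) ∧
    IsLadderC m a (P 0).1 (P 0).2 ∧
    IsLadderC m a (P (r - 1)).1 (P (r - 1)).2 ∧
    (∀ s, s < r → (Even ((P s).2) ↔ s = r - 1)) ∧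
    (∀ s, s < r → (Odd ((P s).1) ↔ s = 0))

/-- `[0,l]` is the bottomless block of `a`: a union of consecutive parts
starting at `0`, all with even bottom, the last one being a ladder and the
unique part with even top. -/
def IsBlockTopC (m : ℕ) (a : ℕ → ℕ) (l : ℕ) : Prop :=
  ∃ (r : ℕ) (P : ℕ → ℕ × ℕ), 0 < r ∧ (P 0).1 = 0 ∧ (P (r - 1)).2 = l ∧
    (∀ s, s < r → IsPartC m a (P s).1 (P s).2) ∧
    (∀ s, s + 1 < r → (P (s + 1)).1 = (P s).2 + 1) ∧
    IsLadderC m a (P (r - 1)).1 (P (r - 1)).2 ∧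
    (∀ s, s < r → (Even ((P s).2) ↔ s = r - 1)) ∧
    (∀ s, s < r → Even ((P s).1))

/-- `[k,l]` is a block of `a` (either with a bottom, or the bottomless block). -/
def IsBlockC (m : ℕ) (a : ℕ → ℕ) (k l : ℕ) : Prop :=
  IsBlockBotC m a k l ∨ (k = 0 ∧ IsBlockTopC m a l)

section Aux

variable {m : ℕ} {a : ℕ → ℕ}

/-- steps by 2 -/
lemma aux_astep (hstep : ∀ i, i + 2 ≤ 2*m → a i + 2 ≤ a (i+2)) :
    ∀ s i, i + 2*s ≤ 2*m → a i + 2*s ≤ a (i + 2*s) := by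
  intro s
  induction s with
  | zero => intro i _; simp
  | succ s ih =>
    intro i h
    have h1 := hstep i (by omega)
    have h2 := ih (i+2) (by omega)
    have : i + 2*(s+1) = i + 2 + 2*s := by omega
    rw [this]
    omega

lemma aux_amono (hmono : DistC m a) :
    ∀ i j, i ≤ j → j ≤ 2*m → a i ≤ a j := by
  intro i j hij hj
  induction j with
  | zero => simp [Nat.le_zero.mp hij]
  | succ j ih =>
    rcases Nat.eq_or_lt_of_le hij with h | h
    · subst h; exact le_refl _
    · have := hmono j (by omega)
      have := ih (by omega) (by omega)
      omega

lemma aux_lb (h1 : 1 ≤ a 1) (hstep : ∀ i, i + 2 ≤ 2*m → a i + 2 ≤ a (i+2)) :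
    ∀ j, j ≤ 2*m → (j+1)/2 ≤ a j := by
  intro j
  induction j using Nat.strong_induction_on with
  | _ j ih =>
    intro hj
    match j, hj with
    | 0, _ => omega
    | 1, _ => omega
    | (j+2), hj =>
      have := ih j (by omega) (by omega)
      have := hstep j (by omega)
      omega

/-- strict monotonicity of mapC within a parity class -/
lemma aux_bmono (h1 : 1 ≤ a 1) (hstep : ∀ i, i + 2 ≤ 2*m → a i + 2 ≤ a (i+2)) :
    ∀ i j, i < j → j ≤ 2*m → i % 2 = j % 2 → mapC a i < mapC a j := by
  intro i j hij hj hpar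
  obtain ⟨s, hs⟩ : ∃ s, j = i + 2*(s+1) := by
    refine ⟨(j - i)/2 - 1, by omega⟩
  subst hs
  have h2 := aux_astep hstep (s+1) i (by omega)
  have hlb' := aux_lb h1 hstep i (by omega)
  simp only [mapC]
  omega

lemma aux_bstep1 (hmono : DistC m a) (i : ℕ) (hi : i + 1 ≤ 2*m) :
    mapC a i ≤ mapC a (i+1) + 1 := by
  have := hmono i hi
  simp only [mapC]; omega

lemma aux_bstep1odd (hmono : DistC m a) (i : ℕ) (hi : i + 1 ≤ 2*m) (hodd : i % 2 = 1) :
    mapC a i ≤ mapC a (i+1) := by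
  have := hmono i hi
  simp only [mapC]; omega

lemma aux_bstep2 (h1 : 1 ≤ a 1) (hstep : ∀ i, i + 2 ≤ 2*m → a i + 2 ≤ a (i+2))
    (i : ℕ) (hi : i + 2 ≤ 2*m) : mapC a i < mapC a (i+2) := by
  have := hstep i hi
  have := aux_lb h1 hstep i (by omega)
  simp only [mapC]; omega

/-- equal mapC values have opposite parity -/
lemma aux_opp (h1 : 1 ≤ a 1) (hstep : ∀ i, i + 2 ≤ 2*m → a i + 2 ≤ a (i+2)) :
    ∀ i j, i ≤ 2*m → j ≤ 2*m → i ≠ j → mapC a i = mapC a j → i % 2 ≠ j % 2 := by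
  intro i j hi hj hne heq hpar
  rcases Nat.lt_or_ge i j with h | h
  · exact absurd heq (Nat.ne_of_lt (aux_bmono h1 hstep i j h hj hpar))
  · exact absurd heq.symm (Nat.ne_of_lt (aux_bmono h1 hstep j i (by omega) hi hpar.symm))

/-- at most two indices share a mapC value -/
lemma aux_pair_unique (ha1 : 1 ≤ a 1) (hstep : ∀ i, i + 2 ≤ 2*m → a i + 2 ≤ a (i+2))
    {j l1 l2 : ℕ} (hj : j ≤ 2*m) (h1 : l1 ≤ 2*m) (h2 : l2 ≤ 2*m)
    (hn1 : l1 ≠ j) (hn2 : l2 ≠ j)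
    (he1 : mapC a l1 = mapC a j) (he2 : mapC a l2 = mapC a j) : l1 = l2 := by
  by_contra hne
  have p1 := aux_opp ha1 hstep l1 j h1 hj hn1 he1
  have p2 := aux_opp ha1 hstep l2 j h2 hj hn2 he2
  have := aux_opp ha1 hstep l1 l2 h1 h2 hne (he1.trans he2.symm)
  omega

end Aux
section Aux2

variable {m : ℕ} {a : ℕ → ℕ}

lemma aux_isolEvenTop (h1 : 1 ≤ a 1) (hstep : ∀ i, i + 2 ≤ 2*m → a i + 2 ≤ a (i+2))
    (hmono : DistC m a) {l : ℕ} (hl2 : l ≤ 2*m) (hle : l % 2 = 0)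
    (hd : 0 < l → a (l-1) < a l) (hu : l < 2*m → a l + 2 ≤ a (l+1)) :
    IsIsolC m a l := by
  refine ⟨hl2, ?_⟩
  intro j hj hne heq
  by_cases hpar : j % 2 = l % 2
  · rcases Nat.lt_or_ge j l with h | h
    · exact absurd heq (Nat.ne_of_lt (aux_bmono h1 hstep j l h hl2 hpar))
    · exact absurd heq.symm (Nat.ne_of_lt (aux_bmono h1 hstep l j (by omega) hj hpar.symm))
  · rcases Nat.lt_or_ge j l with h | h
    · -- j < l, j odd
      have hl0 : 0 < l := by omega
      have hd' := hd hl0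
      have hlbl := aux_lb h1 hstep (l-1) (by omega)
      have hb : mapC a (l-1) < mapC a l := by
        simp only [mapC]; omega
      rcases Nat.eq_or_lt_of_le (show j ≤ l - 1 by omega) with h' | h'
      · rw [h'] at heq; omega
      · have := aux_bmono h1 hstep j (l-1) h' (by omega) (by omega)
        omega
    · -- j > l, j odd
      have hlt : l < 2*m := by omega
      have hu' := hu hlt
      have hlbl := aux_lb h1 hstep l hl2
      have hb : mapC a l < mapC a (l+1) := by
        simp only [mapC]; omega
      rcases Nat.eq_or_lt_of_le (show l + 1 ≤ j by omega) with h' | h'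
      · rw [← h'] at heq; omega
      · have := aux_bmono h1 hstep (l+1) j h' hj (by omega)
        omega

lemma aux_isolOddBot (h1 : 1 ≤ a 1) (hstep : ∀ i, i + 2 ≤ 2*m → a i + 2 ≤ a (i+2))
    (hmono : DistC m a) {k : ℕ} (hk2 : k ≤ 2*m) (hko : k % 2 = 1)
    (hd : a (k-1) + 2 ≤ a k) (hu : k < 2*m → a k < a (k+1)) :
    IsIsolC m a k := by
  refine ⟨hk2, ?_⟩
  intro j hj hne heq
  by_cases hpar : j % 2 = k % 2
  · rcases Nat.lt_or_ge j k with h | h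
    · exact absurd heq (Nat.ne_of_lt (aux_bmono h1 hstep j k h hk2 hpar))
    · exact absurd heq.symm (Nat.ne_of_lt (aux_bmono h1 hstep k j (by omega) hj hpar.symm))
  · rcases Nat.lt_or_ge j k with h | h
    · -- j < k, j even
      have hlbl := aux_lb h1 hstep (k-1) (by omega)
      have hb : mapC a (k-1) < mapC a k := by
        simp only [mapC]; omega
      rcases Nat.eq_or_lt_of_le (show j ≤ k - 1 by omega) with h' | h'
      · rw [h'] at heq; omega
      · have := aux_bmono h1 hstep j (k-1) h' (by omega) (by omega)
        omega
    · -- j > k, j even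
      have hlt : k < 2*m := by omega
      have hu' := hu hlt
      have hlbl := aux_lb h1 hstep k hk2
      have hb : mapC a k < mapC a (k+1) := by
        simp only [mapC]; omega
      rcases Nat.eq_or_lt_of_le (show k + 1 ≤ j by omega) with h' | h'
      · rw [← h'] at heq; omega
      · have := aux_bmono h1 hstep (k+1) j h' hj (by omega)
        omega

/-- characterization of indices with smaller mapC value than an isolated point -/
lemma aux_key (h1 : 1 ≤ a 1) (hstep : ∀ i, i + 2 ≤ 2*m → a i + 2 ≤ a (i+2))
    (hmono : DistC m a) {k : ℕ} (hiso : IsIsolC m a k) {j : ℕ} (hj : j ≤ 2*m) :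
    mapC a j < mapC a k ↔
      ((j < k ∧ ¬(j = k-1 ∧ k % 2 = 1 ∧ a k = a (k-1))) ∨
       (j = k+1 ∧ k % 2 = 0 ∧ k < 2*m ∧ a (k+1) = a k)) := by
  obtain ⟨hk2, hisol⟩ := hiso
  have hlbk := aux_lb h1 hstep k hk2
  constructor
  · intro hlt
    have hne : j ≠ k := by rintro rfl; omega
    rcases Nat.lt_or_ge j k with h | h
    · left
      refine ⟨h, ?_⟩
      rintro ⟨rfl, hko, hflat⟩
      have : mapC a (k-1) = mapC a k + 1 := by
        simp only [mapC]; omega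
      omega
    · right
      by_cases hpar : j % 2 = k % 2
      · exact absurd hlt (by
          have := aux_bmono h1 hstep k j (by omega) hj hpar.symm; omega)
      · have hj1 : k + 1 ≤ j := by omega
        rcases Nat.eq_or_lt_of_le hj1 with h' | h'
        · -- j = k+1
          have hke : k % 2 = 0 := by
            by_contra hko
            have := aux_bstep1odd hmono k (by omega) (by omega)
            rw [← h'] at hlt; omega
          have hmk := hmono k (by omega)
          have hflat : a (k+1) = a k := by
            rw [← h'] at hlt
            simp only [mapC] at hlt
            omega
          exact ⟨h'.symm, hke, by omega, hflat⟩
        · -- j ≥ k+3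
          have hj3 : k + 3 ≤ j := by omega
          have hb1 := aux_bstep1 hmono k (by omega)
          have hb2 := aux_bstep2 h1 hstep (k+1) (by omega)
          rw [show k + 1 + 2 = k + 3 from by omega] at hb2
          have hj' : mapC a (k+3) ≤ mapC a j := by
            rcases Nat.eq_or_lt_of_le hj3 with h'' | h''
            · rw [h'']
            · exact le_of_lt (aux_bmono h1 hstep (k+3) j h'' hj (by omega))
          have : mapC a j ≠ mapC a k := hisol j hj hne
          omega
  · rintro (⟨hlt, hbad⟩ | ⟨rfl, hke, hk2m, hflat⟩)
    · have hne : j ≠ k := by omega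
      have hne' : mapC a j ≠ mapC a k := hisol j hj hne
      by_cases hpar : j % 2 = k % 2
      · exact aux_bmono h1 hstep j k hlt hk2 hpar
      · rcases Nat.eq_or_lt_of_le (show j ≤ k-1 by omega) with h' | h'
        · -- j = k - 1
          by_cases hko : k % 2 = 1
          · have hflat : a k ≠ a (k-1) := by
              intro hf; exact hbad ⟨by omega, hko, hf⟩
            have hmk := hmono (k-1) (by omega)
            rw [show k - 1 + 1 = k by omega] at hmk
            have hlbj := aux_lb h1 hstep (k-1) (by omega)
            have : mapC a (k-1) ≤ mapC a k := by
              simp only [mapC]; omega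
            subst h'; omega
          · have := aux_bstep1odd hmono (k-1) (by omega) (by omega)
            rw [show k - 1 + 1 = k by omega] at this
            subst h'; omega
        · -- j ≤ k-3
          have hb2 := aux_bstep2 h1 hstep (k-3) (by omega)
          rw [show k - 3 + 2 = k - 1 by omega] at hb2
          have hb1 := aux_bstep1 hmono (k-1) (by omega)
          rw [show k - 1 + 1 = k by omega] at hb1
          have hj' : mapC a j ≤ mapC a (k-3) := by
            rcases Nat.eq_or_lt_of_le (show j ≤ k-3 by omega) with h'' | h''
            · rw [h'']
            · exact le_of_lt (aux_bmono h1 hstep j (k-3) h'' (by omega) (by omega))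
          omega
    · have hne' : mapC a (k+1) ≠ mapC a k := hisol (k+1) (by omega) (by omega)
      have hmk := hmono k (by omega)
      have : mapC a (k+1) ≤ mapC a k := by
        simp only [mapC]; omega
      omega

end Aux2
section Aux3

variable {m N : ℕ} {a K : ℕ → ℕ}

lemma aux_even_invol (f : ℕ → ℕ) : ∀ (nn : ℕ) (s : Finset ℕ), s.card ≤ nn →
    (∀ x ∈ s, f x ∈ s) → (∀ x ∈ s, f x ≠ x) → (∀ x ∈ s, f (f x) = x) →
    Even s.card := by
  intro nn
  induction nn with
  | zero =>
    intro s h _ _ _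
    have h0 : s.card = 0 := by omega
    rw [h0]; exact ⟨0, rfl⟩
  | succ nn ih =>
    intro s hcard hmem hne hinv
    rcases s.eq_empty_or_nonempty with rfl | ⟨x, hx⟩
    · simp
    · have hfx : f x ∈ s.erase x := Finset.mem_erase.mpr ⟨hne x hx, hmem x hx⟩
      set s' := (s.erase x).erase (f x) with hs'
      have hc : s'.card + 2 = s.card := by
        rw [hs', Finset.card_erase_of_mem hfx, Finset.card_erase_of_mem hx]
        have h1 : 0 < (s.erase x).card := Finset.card_pos.mpr ⟨f x, hfx⟩
        have h2 : (s.erase x).card = s.card - 1 := Finset.card_erase_of_mem hx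
        omega
      have hsub : ∀ y ∈ s', y ∈ s ∧ y ≠ x ∧ y ≠ f x := by
        intro y hy
        rw [hs'] at hy
        simp only [Finset.mem_erase] at hy
        exact ⟨hy.2.2, hy.2.1, hy.1⟩
      have hmem' : ∀ y ∈ s', f y ∈ s' := by
        intro y hy
        obtain ⟨hys, hyx, hyfx⟩ := hsub y hy
        rw [hs']
        simp only [Finset.mem_erase]
        refine ⟨?_, ?_, hmem y hys⟩
        · intro h; exact hyx (by rw [← hinv y hys, h, hinv x hx])
        · intro h; exact hyfx (by rw [← hinv y hys, h])
      have he : Even s'.card := by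
        refine ih s' (by omega) hmem' ?_ ?_
        · intro y hy; exact hne y (hsub y hy).1
        · intro y hy; exact hinv y (hsub y hy).1
      obtain ⟨w, hw⟩ := he
      exact ⟨w + 1, by omega⟩

lemma aux_count (hE : EnumC m a N K) {t : ℕ} (ht : t < N) :
    t = ((Finset.range (2*m+1)).filter
      (fun j => IsIsolC m a j ∧ mapC a j < mapC a (K t))).card := by
  obtain ⟨hKiso, hKsurj, hKmono⟩ := hE
  suffices h : (Finset.range t).card = ((Finset.range (2*m+1)).filter
      (fun j => IsIsolC m a j ∧ mapC a j < mapC a (K t))).card by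
    simpa using h
  apply Finset.card_bij (fun s _ => K s)
  · intro s hs
    simp only [Finset.mem_range] at hs
    simp only [Finset.mem_filter, Finset.mem_range]
    have hiso := hKiso s (by omega)
    exact ⟨by have := hiso.1; omega, hiso, hKmono s t hs ht⟩
  · intro s1 hs1 s2 hs2 heq
    simp only [Finset.mem_range] at hs1 hs2
    by_contra hne
    rcases Nat.lt_or_ge s1 s2 with h | h
    · have := hKmono s1 s2 h (by omega); rw [heq] at this; omega
    · have := hKmono s2 s1 (by omega) (by omega); rw [heq] at this; omega
  · intro j hj
    simp only [Finset.mem_filter, Finset.mem_range] at hj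
    obtain ⟨hjr, hjiso, hjlt⟩ := hj
    obtain ⟨s, hsN, hKs⟩ := hKsurj j hjiso
    refine ⟨s, Finset.mem_range.mpr ?_, hKs⟩
    by_contra hst
    rcases Nat.eq_or_lt_of_le (show t ≤ s by omega) with h | h
    · rw [← h] at hKs; rw [hKs] at hjlt; omega
    · have := hKmono t s h hsN; rw [hKs] at this; omega

lemma aux_below_card (h1 : 1 ≤ a 1) (hstep : ∀ i, i + 2 ≤ 2*m → a i + 2 ≤ a (i+2))
    (hmono : DistC m a) {k : ℕ} (hiso : IsIsolC m a k) :
    ((Finset.range (2*m+1)).filter (fun j => mapC a j < mapC a k)).card =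
      if k % 2 = 1 ∧ a k = a (k-1) then k - 1
      else if k % 2 = 0 ∧ k < 2*m ∧ a (k+1) = a k then k + 1
      else k := by
  have hk2 := hiso.1
  have key := fun (j : ℕ) (hj : j ≤ 2*m) => aux_key h1 hstep hmono hiso (j := j) hj
  by_cases hL : k % 2 = 1 ∧ a k = a (k-1)
  · have hset : (Finset.range (2*m+1)).filter (fun j => mapC a j < mapC a k)
        = (Finset.range k).erase (k-1) := by
      ext j
      simp only [Finset.mem_filter, Finset.mem_range, Finset.mem_erase]
      constructor
      · rintro ⟨hjr, hjlt⟩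
        rcases (key j (by omega)).mp hjlt with ⟨h, hb⟩ | ⟨rfl, hke, _, _⟩
        · exact ⟨fun he => hb ⟨he, hL⟩, h⟩
        · omega
      · rintro ⟨hne, hlt⟩
        refine ⟨by omega, (key j (by omega)).mpr (Or.inl ⟨hlt, ?_⟩)⟩
        rintro ⟨he, _⟩; exact hne he
    rw [hset, if_pos hL, Finset.card_erase_of_mem (Finset.mem_range.mpr (by omega)),
      Finset.card_range]
  · rw [if_neg hL]
    by_cases hR : k % 2 = 0 ∧ k < 2*m ∧ a (k+1) = a k
    · have hset : (Finset.range (2*m+1)).filter (fun j => mapC a j < mapC a k)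
          = insert (k+1) (Finset.range k) := by
        ext j
        simp only [Finset.mem_filter, Finset.mem_range, Finset.mem_insert]
        constructor
        · rintro ⟨hjr, hjlt⟩
          rcases (key j (by omega)).mp hjlt with ⟨h, _⟩ | ⟨rfl, _, _, _⟩
          · exact Or.inr h
          · exact Or.inl rfl
        · rintro (rfl | hlt)
          · exact ⟨by omega, (key _ (by omega)).mpr (Or.inr ⟨rfl, hR⟩)⟩
          · refine ⟨by omega, (key j (by omega)).mpr (Or.inl ⟨hlt, ?_⟩)⟩
            rintro ⟨_, hko, _⟩; exact hL ⟨hko, by assumption⟩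
      rw [hset, if_pos hR, Finset.card_insert_of_notMem (by simp), Finset.card_range]
    · have hset : (Finset.range (2*m+1)).filter (fun j => mapC a j < mapC a k)
          = Finset.range k := by
        ext j
        simp only [Finset.mem_filter, Finset.mem_range]
        constructor
        · rintro ⟨hjr, hjlt⟩
          rcases (key j (by omega)).mp hjlt with ⟨h, _⟩ | ⟨rfl, hke, hkm, hf⟩
          · exact h
          · exact absurd ⟨hke, hkm, hf⟩ hR
        · intro hlt
          refine ⟨by omega, (key j (by omega)).mpr (Or.inl ⟨hlt, ?_⟩)⟩
          rintro ⟨_, hko, hf⟩; exact hL ⟨hko, hf⟩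
      rw [hset, if_neg hR, Finset.card_range]

/-- the displacement criterion -/
lemma aux_crit (h1 : 1 ≤ a 1) (hstep : ∀ i, i + 2 ≤ 2*m → a i + 2 ≤ a (i+2))
    (hmono : DistC m a) (hE : EnumC m a N K) {k t : ℕ}
    (hiso : IsIsolC m a k) (ht : t < N) (hKt : K t = k) :
    (K t % 2 = t % 2) ↔
      ¬((k % 2 = 1 ∧ a k = a (k-1)) ∨ (k % 2 = 0 ∧ k < 2*m ∧ a (k+1) = a k)) := by
  have hk2 := hiso.1
  have hcount := aux_count hE ht
  rw [hKt] at hcount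
  set A := (Finset.range (2*m+1)).filter (fun j => IsIsolC m a j ∧ mapC a j < mapC a k) with hA
  set C := (Finset.range (2*m+1)).filter (fun j => ¬ IsIsolC m a j ∧ mapC a j < mapC a k) with hC
  set B := (Finset.range (2*m+1)).filter (fun j => mapC a j < mapC a k) with hB
  have hsplit : A.card + C.card = B.card := by
    rw [hA, hC, hB]
    rw [show ((Finset.range (2*m+1)).filter (fun j => IsIsolC m a j ∧ mapC a j < mapC a k))
        = ((Finset.range (2*m+1)).filter (fun j => mapC a j < mapC a k)).filter
            (fun j => IsIsolC m a j) from by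
      rw [Finset.filter_filter]; apply Finset.filter_congr; intro j _;
        simp [and_comm]]
    rw [show ((Finset.range (2*m+1)).filter (fun j => ¬ IsIsolC m a j ∧ mapC a j < mapC a k))
        = ((Finset.range (2*m+1)).filter (fun j => mapC a j < mapC a k)).filter
            (fun j => ¬ IsIsolC m a j) from by
      rw [Finset.filter_filter]; apply Finset.filter_congr; intro j _;
        simp [and_comm]]
    exact Finset.card_filter_add_card_filter_not _
  -- C has even cardinality via the partner involution
  have hCeven : Even C.card := by
    classical
    set f : ℕ → ℕ := fun j =>
      if h : ∃ l', l' ≤ 2*m ∧ l' ≠ j ∧ mapC a l' = mapC a j then h.choose else j with hf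
    have hfspec : ∀ j, j ≤ 2*m → ¬ IsIsolC m a j →
        f j ≤ 2*m ∧ f j ≠ j ∧ mapC a (f j) = mapC a j := by
      intro j hj hni
      have hex : ∃ l', l' ≤ 2*m ∧ l' ≠ j ∧ mapC a l' = mapC a j := by
        by_contra hno
        push_neg at hno
        exact hni ⟨hj, fun l hl hlj => hno l hl hlj⟩
      rw [hf]
      simp only [dif_pos hex]
      exact hex.choose_spec
    apply aux_even_invol f C.card C (le_refl _)
    · intro x hx
      rw [hC] at hx
      simp only [Finset.mem_filter, Finset.mem_range] at hx
      obtain ⟨hxr, hxni, hxlt⟩ := hx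
      obtain ⟨hf1, hf2, hf3⟩ := hfspec x (by omega) hxni
      rw [hC]
      simp only [Finset.mem_filter, Finset.mem_range]
      refine ⟨by omega, ?_, by omega⟩
      intro hisofx
      exact (hisofx.2 x (by omega) (fun h => hf2 h.symm)) hf3.symm
    · intro x hx
      rw [hC] at hx
      simp only [Finset.mem_filter, Finset.mem_range] at hx
      exact (hfspec x (by omega) hx.2.1).2.1
    · intro x hx
      rw [hC] at hx
      simp only [Finset.mem_filter, Finset.mem_range] at hx
      obtain ⟨hxr, hxni, hxlt⟩ := hx
      obtain ⟨hf1, hf2, hf3⟩ := hfspec x (by omega) hxni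
      have hnifx : ¬ IsIsolC m a (f x) := by
        intro hisofx
        exact (hisofx.2 x (by omega) (fun h => hf2 h.symm)) hf3.symm
      obtain ⟨hg1, hg2, hg3⟩ := hfspec (f x) hf1 hnifx
      exact aux_pair_unique h1 hstep hf1 hg1 (by omega) hg2 (fun h => hf2 h.symm) hg3 hf3.symm
  have hBcard := aux_below_card h1 hstep hmono hiso
  rw [← hB] at hBcard
  rw [hKt]
  obtain ⟨w, hw⟩ := hCeven
  by_cases hL : k % 2 = 1 ∧ a k = a (k-1)
  · rw [if_pos hL] at hBcard
    constructor
    · intro h; omega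
    · intro h; exfalso; exact h (Or.inl hL)
  · rw [if_neg hL] at hBcard
    by_cases hR : k % 2 = 0 ∧ k < 2*m ∧ a (k+1) = a k
    · rw [if_pos hR] at hBcard
      constructor
      · intro h; omega
      · intro h; exfalso; exact h (Or.inr hR)
    · rw [if_neg hR] at hBcard
      constructor
      · intro _ hor
        rcases hor with h | h
        · exact hL h
        · exact hR h
      · intro _; omega

end Aux3
/-- the "displaced" condition for an isolated point -/
def BadC (m : ℕ) (a : ℕ → ℕ) (x : ℕ) : Prop :=
  (x % 2 = 1 ∧ a x = a (x-1)) ∨ (x % 2 = 0 ∧ x < 2*m ∧ a (x+1) = a x)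

section Aux4

variable {m : ℕ} {a : ℕ → ℕ}

lemma aux_pairStruct (h1 : 1 ≤ a 1) (hstep : ∀ i, i + 2 ≤ 2*m → a i + 2 ≤ a (i+2))
    (hmono : DistC m a) {i j : ℕ} (hij : i < j) (hj : j ≤ 2*m)
    (heq : mapC a i = mapC a j) :
    (j = i+1 ∧ ((i % 2 = 0 ∧ a (i+1) = a i + 1) ∨ (i % 2 = 1 ∧ a (i+1) = a i))) ∨
    (j = i+3 ∧ i % 2 = 0 ∧ a (i+1) = a i ∧ a (i+3) = a (i+2)) := by
  have hpar := aux_opp h1 hstep i j (by omega) hj (by omega) heq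
  have hlbi := aux_lb h1 hstep i (by omega)
  rcases Nat.lt_or_ge j (i+2) with hc | hc
  · -- j = i+1
    have hji : j = i + 1 := by omega
    subst hji
    have hlbj := aux_lb h1 hstep (i+1) hj
    have hm := hmono i (by omega)
    left
    refine ⟨rfl, ?_⟩
    rcases Nat.even_or_odd i with he | ho
    · left
      have hie : i % 2 = 0 := Nat.even_iff.mp he
      refine ⟨hie, ?_⟩
      simp only [mapC] at heq
      omega
    · right
      have hio : i % 2 = 1 := Nat.odd_iff.mp ho
      refine ⟨hio, ?_⟩
      simp only [mapC] at heq
      omega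
  · rcases Nat.lt_or_ge j (i+4) with hc2 | hc2
    · -- j = i+3
      have hji : j = i + 3 := by omega
      subst hji
      have hlb1 := aux_lb h1 hstep (i+1) (by omega)
      have hlb2 := aux_lb h1 hstep (i+2) (by omega)
      have hlb3 := aux_lb h1 hstep (i+3) (by omega)
      have hb1 := aux_bstep1 hmono i (by omega)
      have hb2 := aux_bstep2 h1 hstep (i+1) (by omega)
      rw [show i + 1 + 2 = i + 3 from by omega] at hb2
      have hie : i % 2 = 0 := by
        by_contra hio
        have := aux_bstep1odd hmono i (by omega) (by omega)
        omega
      have hb3 := aux_bstep2 h1 hstep i (by omega)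
      have hb4 := aux_bstep1 hmono (i+2) (by omega)
      rw [show i + 2 + 1 = i + 3 from by omega] at hb4
      have hm0 := hmono i (by omega)
      have hm2 := hmono (i+2) (by omega)
      rw [show i + 2 + 1 = i + 3 from by omega] at hm2
      right
      refine ⟨rfl, hie, ?_, ?_⟩ <;>
      · simp only [mapC] at heq hb1 hb2 hb3 hb4
        omega
    · -- j ≥ i+4, opposite parity so j ≥ i+5 : contradiction
      exfalso
      have hj5 : i + 5 ≤ j := by omega
      have hlb1 := aux_lb h1 hstep (i+1) (by omega)
      have hb1 := aux_bstep1 hmono i (by omega)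
      have hb2 := aux_bstep2 h1 hstep (i+1) (by omega)
      rw [show i + 1 + 2 = i + 3 from by omega] at hb2
      have hb3 := aux_bstep2 h1 hstep (i+3) (by omega)
      rw [show i + 3 + 2 = i + 5 from by omega] at hb3
      have hj' : mapC a (i+5) ≤ mapC a j := by
        rcases Nat.eq_or_lt_of_le hj5 with h'' | h''
        · rw [h'']
        · exact le_of_lt (aux_bmono h1 hstep (i+5) j h'' hj (by omega))
      omega

lemma aux_ladderNoIsol (h1 : 1 ≤ a 1) {p q : ℕ} (hl : IsLadderC m a p q)
    {j : ℕ} (hpj : p ≤ j) (hjq : j ≤ q) (hiso : IsIsolC m a j) :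
    (j = p ∧ p % 2 = 1) ∨ (j = q ∧ q % 2 = 0) := by
  obtain ⟨hpq, hq2, hpat, hbd, htd⟩ := hl
  rcases Nat.even_or_odd j with he | ho
  · have hje : j % 2 = 0 := Nat.even_iff.mp he
    rcases Nat.eq_or_lt_of_le hjq with h | h
    · right; exact ⟨h, by omega⟩
    · exfalso
      have e1 := hpat j hpj (by omega)
      have e2 := hpat (j+1) (by omega) (by omega)
      have : mapC a (j+1) = mapC a j := by
        simp only [mapC]; omega
      exact hiso.2 (j+1) (by omega) (by omega) this
  · have hjo : j % 2 = 1 := Nat.odd_iff.mp ho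
    rcases Nat.eq_or_lt_of_le hpj with h | h
    · left; exact ⟨h.symm, by omega⟩
    · exfalso
      have e1 := hpat j hpj (by omega)
      have e2 := hpat (j-1) (by omega) (by omega)
      have : mapC a (j-1) = mapC a j := by
        simp only [mapC]; omega
      exact hiso.2 (j-1) (by omega) (by omega) this

lemma aux_stairDisp {p q : ℕ} (hs : IsStairC m a p q) (hpe : p % 2 = 0)
    {j : ℕ} (hpj : p ≤ j) (hjq : j ≤ q) : BadC m a j := by
  obtain ⟨hpq, hq2, hlen, hpat, hbd, htd⟩ := hs
  have hqo : q % 2 = 1 := by omega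
  rcases Nat.even_or_odd j with he | ho
  · have hje : j % 2 = 0 := Nat.even_iff.mp he
    have hjq' : j < q := by omega
    have e1 := hpat j hpj (by omega)
    have e2 := hpat (j+1) (by omega) (by omega)
    right
    refine ⟨hje, by omega, by omega⟩
  · have hjo : j % 2 = 1 := Nat.odd_iff.mp ho
    have hpj' : p < j := by omega
    have e1 := hpat j hpj (by omega)
    have e2 := hpat (j-1) (by omega) (by omega)
    left
    refine ⟨hjo, by omega⟩

lemma aux_ladderTopFacts (h1 : 1 ≤ a 1) (hstep : ∀ i, i + 2 ≤ 2*m → a i + 2 ≤ a (i+2))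
    (hmono : DistC m a) {p l : ℕ} (hl : IsLadderC m a p l) (hle : l % 2 = 0) :
    IsIsolC m a l ∧ ¬ BadC m a l := by
  obtain ⟨hpq, hq2, hpat, hbd, htd⟩ := hl
  have hd : 0 < l → a (l-1) < a l := by
    intro hl0
    rcases Nat.eq_or_lt_of_le hpq with h | h
    · have := hbd (by omega)
      rw [← h]; omega
    · have e1 := hpat (l-1) (by omega) (by omega)
      have e2 := hpat l hpq (le_refl _)
      omega
  have hu : l < 2*m → a l + 2 ≤ a (l+1) := fun h => by have := htd h; omega
  refine ⟨aux_isolEvenTop h1 hstep hmono hq2 hle hd hu, ?_⟩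
  rintro (⟨h, _⟩ | ⟨_, hlm, hf⟩)
  · omega
  · have := hu hlm; omega

lemma aux_ladderBotFacts (h1 : 1 ≤ a 1) (hstep : ∀ i, i + 2 ≤ 2*m → a i + 2 ≤ a (i+2))
    (hmono : DistC m a) {k q : ℕ} (hl : IsLadderC m a k q) (hko : k % 2 = 1) :
    IsIsolC m a k ∧ ¬ BadC m a k ∧ a (k-1) + 2 ≤ a k := by
  obtain ⟨hpq, hq2, hpat, hbd, htd⟩ := hl
  have hd : a (k-1) + 2 ≤ a k := by have := hbd (by omega); omega
  have hu : k < 2*m → a k < a (k+1) := by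
    intro hkm
    rcases Nat.eq_or_lt_of_le hpq with h | h
    · have := htd (by omega)
      rw [← h] at this; omega
    · have e1 := hpat (k+1) (by omega) (by omega)
      omega
  refine ⟨aux_isolOddBot h1 hstep hmono (by omega) hko hd hu, ?_, hd⟩
  rintro (⟨_, hf⟩ | ⟨h, _⟩)
  · omega
  · omega

lemma aux_cover {r : ℕ} {P : ℕ → ℕ × ℕ} (hr : 0 < r)
    (hcons : ∀ s, s + 1 < r → (P (s+1)).1 = (P s).2 + 1)
    (hbnd : ∀ s, s < r → (P s).1 ≤ (P s).2) {j : ℕ} (hj : (P 0).1 ≤ j) :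
    ∀ s, s < r → j ≤ (P s).2 → ∃ s', s' < r ∧ (P s').1 ≤ j ∧ j ≤ (P s').2 := by
  intro s
  induction s with
  | zero => intro hs hjs; exact ⟨0, hs, hj, hjs⟩
  | succ s ih =>
    intro hs hjs
    rcases Nat.lt_or_ge (P s).2 j with h | h
    · have := hcons s hs
      exact ⟨s+1, hs, by omega, hjs⟩
    · exact ih (by omega) h

lemma aux_chain_le {r : ℕ} {P : ℕ → ℕ × ℕ}
    (hcons : ∀ s, s + 1 < r → (P (s+1)).1 = (P s).2 + 1)
    (hbnd : ∀ s, s < r → (P s).1 ≤ (P s).2) :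
    ∀ s, s < r → (P 0).1 ≤ (P s).2 := by
  intro s
  induction s with
  | zero => intro hs; exact hbnd 0 hs
  | succ s ih =>
    intro hs
    have h1 := hcons s hs
    have h2 := hbnd (s+1) hs
    have := ih (by omega)
    omega

lemma aux_noCross (h1 : 1 ≤ a 1) (hstep : ∀ i, i + 2 ≤ 2*m → a i + 2 ≤ a (i+2))
    (hmono : DistC m a) {k l : ℕ} (hko : k % 2 = 1 ∨ k = 0) (hle : l % 2 = 0)
    (hbd : 0 < k → a (k-1) + 2 ≤ a k) (hbu : l < 2*m → a l + 2 ≤ a (l+1))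
    (hl2 : l ≤ 2*m)
    {j j' : ℕ} (hkj : k ≤ j) (hjl : j ≤ l) (hj' : j' ≤ 2*m) (hne : j' ≠ j)
    (heq : mapC a j' = mapC a j) : k ≤ j' ∧ j' ≤ l := by
  constructor
  · by_contra hc
    push_neg at hc
    have hk0 : 0 < k := by omega
    have hkodd : k % 2 = 1 := by rcases hko with h | h; exact h; omega
    have hbd' := hbd hk0
    rcases aux_pairStruct h1 hstep hmono (show j' < j by omega) (by omega) heq with
      ⟨hj1, (⟨hpe, hpf⟩ | ⟨hpo, hpf⟩)⟩ | ⟨hj3, hpe, hpf1, hpf2⟩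
    · -- j = j'+1 : then j' = k-1, j = k
      have hj'e : j' = k - 1 := by omega
      rw [hj'e, show k - 1 + 1 = k from by omega] at hpf
      omega
    · have hj'e : j' = k - 1 := by omega
      rw [hj'e, show k - 1 + 1 = k from by omega] at hpf
      omega
    · -- j = j'+3
      have hcase : j' = k - 1 ∨ (2 ≤ k ∧ j' = k - 2) ∨ (3 ≤ k ∧ j' = k - 3) := by omega
      rcases hcase with h | ⟨hk2, h⟩ | ⟨hk3, h⟩
      · subst h; rw [show k - 1 + 1 = k from by omega] at hpf1; omega
      · subst h; omega
      · subst h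
        rw [show k - 3 + 3 = k from by omega] at hpf2
        rw [show k - 3 + 2 = k - 1 from by omega] at hpf2
        omega
  · by_contra hc
    push_neg at hc
    have hlm : l < 2*m := by omega
    have hbu' := hbu hlm
    rcases aux_pairStruct h1 hstep hmono (show j < j' by omega) hj' heq.symm with
      ⟨hj1, (⟨hpe, hpf⟩ | ⟨hpo, hpf⟩)⟩ | ⟨hj3, hpe, hpf1, hpf2⟩
    · have hje : j = l := by omega
      rw [hje] at hpf; omega
    · have hje : j = l := by omega
      rw [hje] at hpo; omega
    · have hcase : j = l ∨ (1 ≤ l ∧ j = l - 1) ∨ (2 ≤ l ∧ j = l - 2) := by omega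
      rcases hcase with h | ⟨hl1, h⟩ | ⟨hl22, h⟩
      · rw [h] at hpf1; omega
      · rw [h] at hpe; omega
      · rw [h, show l - 2 + 3 = l + 1 from by omega,
          show l - 2 + 2 = l from by omega] at hpf2
        omega

end Aux4
section Aux5

variable {m N : ℕ} {a K : ℕ → ℕ}

lemma aux_even_nonisol (h1 : 1 ≤ a 1) (hstep : ∀ i, i + 2 ≤ 2*m → a i + 2 ≤ a (i+2))
    (s : Finset ℕ) (hmem2m : ∀ x ∈ s, x ≤ 2*m ∧ ¬ IsIsolC m a x)
    (hclosed : ∀ x y, x ∈ s → y ≤ 2*m → y ≠ x → mapC a y = mapC a x → y ∈ s) :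
    Even s.card := by
  classical
  set f : ℕ → ℕ := fun j =>
    if h : ∃ l', l' ≤ 2*m ∧ l' ≠ j ∧ mapC a l' = mapC a j then h.choose else j with hf
  have hfspec : ∀ j, j ≤ 2*m → ¬ IsIsolC m a j →
      f j ≤ 2*m ∧ f j ≠ j ∧ mapC a (f j) = mapC a j := by
    intro j hj hni
    have hex : ∃ l', l' ≤ 2*m ∧ l' ≠ j ∧ mapC a l' = mapC a j := by
      by_contra hno
      push_neg at hno
      exact hni ⟨hj, fun l hl hlj => hno l hl hlj⟩
    rw [hf]
    simp only [dif_pos hex]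
    exact hex.choose_spec
  apply aux_even_invol f s.card s (le_refl _)
  · intro x hx
    obtain ⟨hx2, hxni⟩ := hmem2m x hx
    obtain ⟨hf1, hf2, hf3⟩ := hfspec x hx2 hxni
    exact hclosed x (f x) hx hf1 hf2 hf3
  · intro x hx
    obtain ⟨hx2, hxni⟩ := hmem2m x hx
    exact (hfspec x hx2 hxni).2.1
  · intro x hx
    obtain ⟨hx2, hxni⟩ := hmem2m x hx
    obtain ⟨hf1, hf2, hf3⟩ := hfspec x hx2 hxni
    have hnifx : ¬ IsIsolC m a (f x) := by
      intro hisofx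
      exact (hisofx.2 x hx2 (fun h => hf2 h.symm)) hf3.symm
    obtain ⟨hg1, hg2, hg3⟩ := hfspec (f x) hf1 hnifx
    exact aux_pair_unique h1 hstep hf1 hg1 hx2 hg2 (fun h => hf2 h.symm) hg3 hf3.symm

lemma aux_blockBot_main (h1 : 1 ≤ a 1) (hstep : ∀ i, i + 2 ≤ 2*m → a i + 2 ≤ a (i+2))
    (hmono : DistC m a) {k l : ℕ} (hb : IsBlockBotC m a k l) :
    k % 2 = 1 ∧ l % 2 = 0 ∧ k ≤ l ∧ l ≤ 2*m ∧
    IsIsolC m a k ∧ ¬ BadC m a k ∧ IsIsolC m a l ∧ ¬ BadC m a l ∧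
    a (k-1) + 2 ≤ a k ∧ (l < 2*m → a l + 2 ≤ a (l+1)) ∧
    (∀ j, k ≤ j → j ≤ l → j ≠ k → j ≠ l → IsIsolC m a j → BadC m a j) := by
  obtain ⟨r, P, hr, hP0, hPr, hparts, hcons, hlad0, hladr, hevtop, hodbot⟩ := hb
  have hko : k % 2 = 1 := by
    have := (hodbot 0 hr).mpr rfl
    rw [hP0] at this
    exact Nat.odd_iff.mp this
  have hle : l % 2 = 0 := by
    have := (hevtop (r-1) (by omega)).mpr rfl
    rw [hPr] at this
    exact Nat.even_iff.mp this
  have hbnd : ∀ s, s < r → (P s).1 ≤ (P s).2 := by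
    intro s hs
    rcases hparts s hs with h | h
    · exact h.1
    · exact h.1
  have hkl : k ≤ l := by
    have := aux_chain_le hcons hbnd (r-1) (by omega)
    omega
  rw [hP0] at hlad0
  rw [hPr] at hladr
  have hl2 : l ≤ 2*m := hladr.2.1
  obtain ⟨hkiso, hknb, hkbd⟩ := aux_ladderBotFacts h1 hstep hmono hlad0 hko
  obtain ⟨hliso, hlnb⟩ := aux_ladderTopFacts h1 hstep hmono hladr hle
  have hbu : l < 2*m → a l + 2 ≤ a (l+1) := by
    intro hlm; have := hladr.2.2.2.2 hlm; omega
  refine ⟨hko, hle, hkl, hl2, hkiso, hknb, hliso, hlnb, hkbd, hbu, ?_⟩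
  intro j hkj hjl hjk hjl' hiso
  obtain ⟨s, hs, hsj1, hsj2⟩ := aux_cover hr hcons hbnd (j := j) (by omega)
    (r-1) (by omega) (by omega)
  by_cases hs0 : s = 0
  · subst hs0
    rcases aux_ladderNoIsol h1 hlad0 (by omega) hsj2 hiso with
      ⟨hj1, _⟩ | ⟨hj2, hj2e⟩
    · exact absurd hj1 hjk
    · exfalso
      have h0r : 0 = r - 1 := (hevtop 0 hr).mp (Nat.even_iff.mpr hj2e)
      apply hjl'
      rw [hj2, ← hPr, ← h0r]
  · rcases hparts s hs with hlad | hstair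
    · rcases aux_ladderNoIsol h1 hlad hsj1 hsj2 hiso with ⟨hj1, hj1o⟩ | ⟨hj2, hj2e⟩
      · exfalso
        have := (hodbot s hs).mp (Nat.odd_iff.mpr hj1o)
        exact hs0 this
      · exfalso
        have hsr : s = r - 1 := (hevtop s hs).mp (Nat.even_iff.mpr hj2e)
        apply hjl'
        rw [hj2, ← hPr, ← hsr]
    · have hpe : (P s).1 % 2 = 0 := by
        have := (hodbot s hs)
        rcases Nat.even_or_odd ((P s).1) with he | ho
        · exact Nat.even_iff.mp he
        · exact absurd (this.mp ho) hs0
      exact aux_stairDisp hstair hpe hsj1 hsj2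

lemma aux_blockTop_main (h1 : 1 ≤ a 1) (hstep : ∀ i, i + 2 ≤ 2*m → a i + 2 ≤ a (i+2))
    (hmono : DistC m a) {l : ℕ} (hb : IsBlockTopC m a l) :
    l % 2 = 0 ∧ l ≤ 2*m ∧ IsIsolC m a l ∧ ¬ BadC m a l ∧
    (l < 2*m → a l + 2 ≤ a (l+1)) ∧
    (∀ j, j ≤ l → j ≠ l → IsIsolC m a j → BadC m a j) := by
  obtain ⟨r, P, hr, hP0, hPr, hparts, hcons, hladr, hevtop, hevbot⟩ := hb
  have hle : l % 2 = 0 := by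
    have := (hevtop (r-1) (by omega)).mpr rfl
    rw [hPr] at this
    exact Nat.even_iff.mp this
  have hbnd : ∀ s, s < r → (P s).1 ≤ (P s).2 := by
    intro s hs
    rcases hparts s hs with h | h
    · exact h.1
    · exact h.1
  rw [hPr] at hladr
  have hl2 : l ≤ 2*m := hladr.2.1
  obtain ⟨hliso, hlnb⟩ := aux_ladderTopFacts h1 hstep hmono hladr hle
  have hbu : l < 2*m → a l + 2 ≤ a (l+1) := by
    intro hlm; have := hladr.2.2.2.2 hlm; omega
  refine ⟨hle, hl2, hliso, hlnb, hbu, ?_⟩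
  intro j hjl hjl' hiso
  obtain ⟨s, hs, hsj1, hsj2⟩ := aux_cover hr hcons hbnd (j := j) (by omega)
    (r-1) (by omega) (by omega)
  rcases hparts s hs with hlad | hstair
  · rcases aux_ladderNoIsol h1 hlad hsj1 hsj2 hiso with ⟨hj1, hj1o⟩ | ⟨hj2, hj2e⟩
    · exfalso
      have := hevbot s hs
      exact (Nat.not_odd_iff_even.mpr this) (Nat.odd_iff.mpr hj1o)
    · exfalso
      have hsr : s = r - 1 := (hevtop s hs).mp (Nat.even_iff.mpr hj2e)
      apply hjl'
      rw [hj2, ← hPr, ← hsr]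
  · have hpe : (P s).1 % 2 = 0 := Nat.even_iff.mp (hevbot s hs)
    exact aux_stairDisp hstair hpe hsj1 hsj2

end Aux5
section Aux6

variable {m N : ℕ} {a K : ℕ → ℕ}

lemma aux_block_evenCount (h1 : 1 ≤ a 1) (hstep : ∀ i, i + 2 ≤ 2*m → a i + 2 ≤ a (i+2))
    (hmono : DistC m a) (hE : EnumC m a N K) {k l : ℕ}
    (hblk : IsBlockC m a k l) :
    Even (((Finset.Icc k l).filter (fun j => ∃ t, t < N ∧ K t = j ∧ K t % 2 ≠ t % 2)).card) := by
  classical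
  -- common facts
  obtain ⟨hko, hle, hkl, hl2, hbd, hbu, hliso, hlnb, hint⟩ :
      (k % 2 = 1 ∨ k = 0) ∧ l % 2 = 0 ∧ k ≤ l ∧ l ≤ 2*m ∧
      (0 < k → a (k-1) + 2 ≤ a k) ∧ (l < 2*m → a l + 2 ≤ a (l+1)) ∧
      IsIsolC m a l ∧ ¬ BadC m a l ∧
      (∀ j, k ≤ j → j ≤ l → j ≠ l → IsIsolC m a j → (j = k ∧ k % 2 = 1) ∨ BadC m a j) := by
    rcases hblk with hb | ⟨rfl, hb⟩
    · obtain ⟨c1, c2, c3, c4, c5, c6, c7, c8, c9, c10, c11⟩ := aux_blockBot_main h1 hstep hmono hb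
      refine ⟨Or.inl c1, c2, c3, c4, fun _ => c9, c10, c7, c8, ?_⟩
      intro j hjk hjl hjl' hiso
      by_cases hjk' : j = k
      · exact Or.inl ⟨hjk', c1⟩
      · exact Or.inr (c11 j hjk hjl hjk' hjl' hiso)
    · obtain ⟨c1, c2, c3, c4, c5, c6⟩ := aux_blockTop_main h1 hstep hmono hb
      exact ⟨Or.inr rfl, c1, by omega, c2, fun h => by omega, c5, c3, c4,
        fun j _ hjl hjl' hiso => Or.inr (c6 j hjl hjl' hiso)⟩
  set T := (Finset.Icc k l).filter (fun j => IsIsolC m a j) with hT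
  set S := (Finset.Icc k l).filter (fun j => ¬ IsIsolC m a j) with hS
  have hSeven : Even S.card := by
    apply aux_even_nonisol h1 hstep
    · intro x hx
      rw [hS] at hx
      simp only [Finset.mem_filter, Finset.mem_Icc] at hx
      exact ⟨by omega, hx.2⟩
    · intro x y hx hy2 hyx heq
      rw [hS] at hx ⊢
      simp only [Finset.mem_filter, Finset.mem_Icc] at hx ⊢
      obtain ⟨⟨hx1, hx2⟩, hxni⟩ := hx
      have hcross := aux_noCross h1 hstep hmono hko hle hbd hbu hl2 hx1 hx2 hy2 hyx heq
      refine ⟨hcross, ?_⟩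
      intro hyiso
      exact (hyiso.2 x (by omega) (fun h => hyx h.symm)) heq.symm
  have hsplit : T.card + S.card = l + 1 - k := by
    rw [hT, hS, Finset.card_filter_add_card_filter_not, Nat.card_Icc]
  have hlT : l ∈ T := by
    rw [hT]; simp only [Finset.mem_filter, Finset.mem_Icc]
    exact ⟨⟨hkl, le_refl l⟩, hliso⟩
  -- the displaced points in the block
  have hDsub : ∀ j, (j ∈ (Finset.Icc k l).filter
      (fun j => ∃ t, t < N ∧ K t = j ∧ K t % 2 ≠ t % 2)) ↔
      (j ∈ T ∧ j ≠ l ∧ ¬(j = k ∧ k % 2 = 1)) := by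
    intro j
    simp only [Finset.mem_filter, Finset.mem_Icc, hT]
    constructor
    · rintro ⟨⟨hj1, hj2⟩, t, ht, hKt, hdisp⟩
      have hiso : IsIsolC m a j := by
        have := hE.1 t ht; rw [hKt] at this; exact this
      refine ⟨⟨⟨hj1, hj2⟩, hiso⟩, ?_, ?_⟩
      · rintro rfl
        exact hdisp ((aux_crit h1 hstep hmono hE hliso ht hKt).mpr hlnb)
      · rintro ⟨rfl, hko'⟩
        rcases hblk with hb | ⟨h0, hb⟩
        · obtain ⟨_, _, _, _, hkiso, hknb, _⟩ := aux_blockBot_main h1 hstep hmono hb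
          exact hdisp ((aux_crit h1 hstep hmono hE hkiso ht hKt).mpr hknb)
        · omega
    · rintro ⟨⟨⟨hj1, hj2⟩, hiso⟩, hjl, hjk⟩
      refine ⟨⟨hj1, hj2⟩, ?_⟩
      obtain ⟨t, ht, hKt⟩ := hE.2.1 j hiso
      refine ⟨t, ht, hKt, ?_⟩
      have hbad : BadC m a j := by
        rcases hint j hj1 hj2 hjl hiso with h | h
        · exact absurd h hjk
        · exact h
      intro hnd
      exact ((aux_crit h1 hstep hmono hE hiso ht hKt).mp hnd) hbad
  rcases hko with hko | hk0
  · -- block with bottom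
    have hkT : k ∈ T := by
      rcases hblk with hb | ⟨rfl, hb⟩
      · obtain ⟨_, _, _, _, hkiso, _⟩ := aux_blockBot_main h1 hstep hmono hb
        rw [hT]; simp only [Finset.mem_filter, Finset.mem_Icc]
        exact ⟨⟨le_refl k, hkl⟩, hkiso⟩
      · omega
    have hkl' : k ≠ l := by omega
    have hset : (Finset.Icc k l).filter (fun j => ∃ t, t < N ∧ K t = j ∧ K t % 2 ≠ t % 2)
        = (T.erase l).erase k := by
      ext j
      rw [hDsub j]
      simp only [Finset.mem_erase]
      constructor
      · rintro ⟨hjT, hjl, hjk⟩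
        refine ⟨?_, hjl, hjT⟩
        intro hjk'
        exact hjk ⟨hjk', hko⟩
      · rintro ⟨hjk, hjl, hjT⟩
        exact ⟨hjT, hjl, fun h => hjk h.1⟩
    rw [hset]
    have hkT' : k ∈ T.erase l := Finset.mem_erase.mpr ⟨hkl', hkT⟩
    rw [Finset.card_erase_of_mem hkT', Finset.card_erase_of_mem hlT]
    have hTpos : 0 < (T.erase l).card := Finset.card_pos.mpr ⟨k, hkT'⟩
    have h2 : (T.erase l).card = T.card - 1 := Finset.card_erase_of_mem hlT
    obtain ⟨w, hw⟩ := hSeven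
    rw [Nat.even_iff]
    omega
  · -- bottomless block
    subst hk0
    have hset : (Finset.Icc 0 l).filter (fun j => ∃ t, t < N ∧ K t = j ∧ K t % 2 ≠ t % 2)
        = T.erase l := by
      ext j
      rw [hDsub j]
      simp only [Finset.mem_erase]
      constructor
      · rintro ⟨hjT, hjl, _⟩
        exact ⟨hjl, hjT⟩
      · rintro ⟨hjl, hjT⟩
        exact ⟨hjT, hjl, fun h => by omega⟩
    rw [hset, Finset.card_erase_of_mem hlT]
    have hTpos : 0 < T.card := Finset.card_pos.mpr ⟨l, hlT⟩
    obtain ⟨w, hw⟩ := hSeven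
    rw [Nat.even_iff]
    omega
end Aux6
/-- an "upper chain" of parts from `q` up to `l`: all bottoms even, all tops odd
except the last part, which is a ladder with even top. -/
def ChainFromC (m : ℕ) (a : ℕ → ℕ) (q l : ℕ) : Prop :=
  ∃ (r : ℕ) (P : ℕ → ℕ × ℕ), 0 < r ∧ (P 0).1 = q ∧ (P (r - 1)).2 = l ∧
    (∀ s, s < r → IsPartC m a (P s).1 (P s).2) ∧
    (∀ s, s + 1 < r → (P (s + 1)).1 = (P s).2 + 1) ∧
    IsLadderC m a (P (r - 1)).1 (P (r - 1)).2 ∧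
    (∀ s, s < r → (Even ((P s).2) ↔ s = r - 1)) ∧
    (∀ s, s < r → Even ((P s).1))

section Aux7

variable {m : ℕ} {a : ℕ → ℕ}

lemma aux_chainTop {l : ℕ} (h : ChainFromC m a 0 l) : IsBlockTopC m a l := h

lemma aux_runpat {p e : ℕ} (hrun : ∀ i, p ≤ i → i < e → a (i+1) = a i + 1) :
    ∀ i, p ≤ i → i ≤ e → a i = a p + (i - p) := by
  intro i hpi hie
  induction i, hpi using Nat.le_induction with
  | base => omega
  | succ i hpi ih =>
    have h1 := hrun i hpi (by omega)
    have h2 := ih (by omega)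
    omega

lemma aux_stairGlue {p jj e : ℕ} (hp2 : (jj - p) % 2 = 0) (hpj : p ≤ jj)
    (hdown : ∀ i, p ≤ i → i ≤ jj + 1 → a i = a p + 2*((i-p)/2))
    (hup : ∀ i, jj ≤ i → i ≤ e → a i = a jj + 2*((i-jj)/2)) :
    ∀ i, p ≤ i → i ≤ e → a i = a p + 2*((i-p)/2) := by
  intro i h1 h2
  rcases Nat.lt_or_ge (jj+1) i with h | h
  · have hu := hup i (by omega) h2
    have hd := hdown jj hpj (by omega)
    omega
  · exact hdown i h1 h

/-- prepend a part with even bottom and odd top to a chain -/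
lemma aux_chainCons {x1 x2 q l : ℕ} (hX : IsPartC m a x1 x2) (hXtop : x2 + 1 = q)
    (hXbot : x1 % 2 = 0) (hXodd : x2 % 2 = 1) (hch : ChainFromC m a q l) :
    ChainFromC m a x1 l := by
  obtain ⟨r, P, hr, hP0, hPr, hparts, hcons, hladr, hevtop, hevbot⟩ := hch
  refine ⟨r + 1, fun s => match s with | 0 => (x1, x2) | s+1 => P s,
    by omega, rfl, ?_, ?_, ?_, ?_, ?_, ?_⟩
  · rw [show r + 1 - 1 = (r-1) + 1 from by omega]
    exact hPr
  · intro s hs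
    match s with
    | 0 => exact hX
    | s+1 => exact hparts s (by omega)
  · intro s hs
    match s with
    | 0 => show (P 0).1 = x2 + 1; omega
    | s+1 => exact hcons s (by omega)
  · rw [show r + 1 - 1 = (r-1) + 1 from by omega]
    exact hladr
  · intro s hs
    match s with
    | 0 =>
      show Even x2 ↔ 0 = r + 1 - 1
      constructor
      · intro he; rw [Nat.even_iff] at he; omega
      · intro h; omega
    | s+1 =>
      show Even (P s).2 ↔ s + 1 = r + 1 - 1
      have := hevtop s (by omega)
      constructor
      · intro h; have := this.mp h; omega
      · intro h; exact this.mpr (by omega)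
  · intro s hs
    match s with
    | 0 => exact Nat.even_iff.mpr hXbot
    | s+1 => exact hevbot s (by omega)

/-- prepend an odd-bottom ladder to a chain, giving a block with a bottom -/
lemma aux_blockBotCons {x1 x2 q l : ℕ} (hX : IsLadderC m a x1 x2) (hXtop : x2 + 1 = q)
    (hXbot : x1 % 2 = 1) (hXodd : x2 % 2 = 1) (hch : ChainFromC m a q l) :
    IsBlockBotC m a x1 l := by
  obtain ⟨r, P, hr, hP0, hPr, hparts, hcons, hladr, hevtop, hevbot⟩ := hch
  refine ⟨r + 1, fun s => match s with | 0 => (x1, x2) | s+1 => P s,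
    by omega, rfl, ?_, ?_, ?_, hX, ?_, ?_, ?_⟩
  · rw [show r + 1 - 1 = (r-1) + 1 from by omega]
    exact hPr
  · intro s hs
    match s with
    | 0 => exact Or.inl hX
    | s+1 => exact hparts s (by omega)
  · intro s hs
    match s with
    | 0 => show (P 0).1 = x2 + 1; omega
    | s+1 => exact hcons s (by omega)
  · rw [show r + 1 - 1 = (r-1) + 1 from by omega]
    exact hladr
  · intro s hs
    match s with
    | 0 =>
      show Even x2 ↔ 0 = r + 1 - 1
      constructor
      · intro he; rw [Nat.even_iff] at he; omega
      · intro h; omega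
    | s+1 =>
      show Even (P s).2 ↔ s + 1 = r + 1 - 1
      have := hevtop s (by omega)
      constructor
      · intro h; have := this.mp h; omega
      · intro h; exact this.mpr (by omega)
  · intro s hs
    match s with
    | 0 => exact iff_of_true (Nat.odd_iff.mpr hXbot) rfl
    | s+1 =>
      show Odd (P s).1 ↔ s + 1 = 0
      constructor
      · intro h
        exfalso
        have := hevbot s (by omega)
        exact (Nat.not_odd_iff_even.mpr this) h
      · intro h; omega

lemma aux_chainSingle {q e : ℕ} (hl : IsLadderC m a q e) (hqe : q % 2 = 0)
    (hee : e % 2 = 0) : ChainFromC m a q e := by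
  refine ⟨1, fun _ => (q, e), by omega, rfl, rfl, ?_, ?_, hl, ?_, ?_⟩
  · intro s hs; exact Or.inl hl
  · intro s hs; omega
  · intro s hs
    have hs0 : s = 0 := by omega
    subst hs0
    exact iff_of_true (Nat.even_iff.mpr hee) rfl
  · intro s hs; exact Nat.even_iff.mpr hqe

lemma aux_blockBotSingle {k l : ℕ} (hl : IsLadderC m a k l) (hko : k % 2 = 1)
    (hle : l % 2 = 0) : IsBlockBotC m a k l := by
  refine ⟨1, fun _ => (k, l), by omega, rfl, rfl, ?_, ?_, hl, hl, ?_, ?_⟩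
  · intro s hs; exact Or.inl hl
  · intro s hs; omega
  · intro s hs
    have hs0 : s = 0 := by omega
    subst hs0
    exact iff_of_true (Nat.even_iff.mpr hle) rfl
  · intro s hs
    have hs0 : s = 0 := by omega
    subst hs0
    exact iff_of_true (Nat.odd_iff.mpr hko) rfl

end Aux7
section Aux8

variable {m : ℕ} {a : ℕ → ℕ}

lemma aux_lrunUp (hstep : ∀ i, i + 2 ≤ 2*m → a i + 2 ≤ a (i+2)) (hmono : DistC m a) :
    ∀ f q, 2*m - q ≤ f → q < 2*m → a (q+1) = a q + 1 →
    ∃ e, q < e ∧ e ≤ 2*m ∧ (∀ i, q ≤ i → i < e → a (i+1) = a i + 1) ∧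
      (e = 2*m ∨ a e + 2 ≤ a (e+1)) := by
  intro f
  induction f with
  | zero => intro q hf hq _; omega
  | succ f ih =>
    intro q hf hq hq1
    rcases Nat.eq_or_lt_of_le (show q + 1 ≤ 2*m from by omega) with he | he
    · exact ⟨q+1, by omega, by omega, fun i h1 h2 => by rw [show i = q from by omega]; exact hq1,
        Or.inl he⟩
    · have hm := hmono (q+1) (by omega)
      have hs := hstep q (by omega)
      rcases Nat.lt_or_ge (a (q+2)) (a (q+1) + 2) with hc | hc
      · -- a (q+2) = a (q+1) + 1
        have hq2 : a (q+2) = a (q+1) + 1 := by omega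
        obtain ⟨e, he1, he2, he3, he4⟩ := ih (q+1) (by omega) (by omega)
          (by rw [show q + 1 + 1 = q + 2 from by omega]; exact hq2)
        refine ⟨e, by omega, he2, ?_, he4⟩
        intro i h1 h2
        rcases Nat.eq_or_lt_of_le h1 with h | h
        · rw [← h]; exact hq1
        · exact he3 i (by omega) h2
      · exact ⟨q+1, by omega, by omega,
          fun i h1 h2 => by rw [show i = q from by omega]; exact hq1,
          Or.inr (by rw [show q + 1 + 1 = q + 2 from by omega]; omega)⟩

lemma aux_lrunDown (hstep : ∀ i, i + 2 ≤ 2*m → a i + 2 ≤ a (i+2)) (hmono : DistC m a) :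
    ∀ q, 0 < q → q ≤ 2*m → a q = a (q-1) + 1 →
    ∃ p, p < q ∧ (∀ i, p ≤ i → i < q → a (i+1) = a i + 1) ∧
      (p = 0 ∨ a (p-1) + 2 ≤ a p) := by
  intro q
  induction q using Nat.strong_induction_on with
  | _ q ih =>
    intro hq0 hq2 hqf
    have hq1' : a (q-1+1) = a (q-1) + 1 := by rw [show q - 1 + 1 = q from by omega]; exact hqf
    rcases Nat.eq_or_lt_of_le (show 1 ≤ q from hq0) with h1 | h1
    · -- q = 1 : p = 0
      exact ⟨0, by omega, fun i hi1 hi2 => by rw [show i = q - 1 from by omega]; exact hq1',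
        Or.inl rfl⟩
    · have hm := hmono (q-2) (by omega)
      rw [show q - 2 + 1 = q - 1 from by omega] at hm
      rcases Nat.lt_or_ge (a (q-2) + 1) (a (q-1)) with hc | hc
      · -- gap at q-2 : p = q-1
        exact ⟨q-1, by omega,
          fun i hi1 hi2 => by rw [show i = q - 1 from by omega]; exact hq1',
          Or.inr (by rw [show q - 1 - 1 = q - 2 from by omega]; omega)⟩
      · rcases Nat.eq_or_lt_of_le hc with hc' | hc'
        · -- a (q-1) = a (q-2) + 1 : recurse
          obtain ⟨p, hp1, hp2, hp3⟩ := ih (q-1) (by omega) (by omega) (by omega)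
            (by rw [show q - 1 - 1 = q - 2 from by omega]; omega)
          refine ⟨p, by omega, ?_, hp3⟩
          intro i hi1 hi2
          rcases Nat.lt_or_ge i (q-1) with h | h
          · exact hp2 i hi1 h
          · rw [show i = q - 1 from by omega]; exact hq1'
        · -- a (q-1) ≤ a (q-2) : flat, contradiction with hstep
          have hs := hstep (q-2) (by omega)
          rw [show q - 2 + 2 = q from by omega] at hs
          omega

lemma aux_srunUp (hstep : ∀ i, i + 2 ≤ 2*m → a i + 2 ≤ a (i+2)) (hmono : DistC m a) :
    ∀ f q, 2*m - q ≤ f → q % 2 = 0 → q < 2*m → a (q+1) = a q →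
    ∃ e, e % 2 = 1 ∧ q < e ∧ e ≤ 2*m ∧
      (∀ i, q ≤ i → i ≤ e → a i = a q + 2*((i-q)/2)) ∧
      (e + 2 ≤ 2*m → a e + 2 < a (e+2)) := by
  intro f
  induction f with
  | zero => intro q hf hqe hq _; omega
  | succ f ih =>
    intro q hf hqe hq hqflat
    by_cases hext : q + 3 ≤ 2*m ∧ a (q+2) = a q + 2 ∧ a (q+3) = a q + 2
    · obtain ⟨hx1, hx2, hx3⟩ := hext
      have hq2m : q + 2 < 2*m := by omega
      obtain ⟨e, he1, he2, he3, he4, he5⟩ := ih (q+2) (by omega) (by omega) hq2m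
        (by rw [show q + 2 + 1 = q + 3 from by omega]; omega)
      refine ⟨e, he1, by omega, he3, ?_, he5⟩
      intro i h1 h2
      rcases Nat.lt_or_ge i (q+2) with h | h
      · have : i = q ∨ i = q + 1 := by omega
        rcases this with rfl | rfl
        · simp
        · rw [hqflat]; rw [show q + 1 - q = 1 from by omega]; simp
      · have := he4 i h h2
        omega
    · refine ⟨q+1, by omega, by omega, by omega, ?_, ?_⟩
      · intro i h1 h2
        have : i = q ∨ i = q + 1 := by omega
        rcases this with rfl | rfl
        · simp
        · rw [hqflat]; rw [show q + 1 - q = 1 from by omega]; simp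
      · intro h23
        rw [show q + 1 + 2 = q + 3 from by omega]
        have hs1 := hstep (q+1) (by omega)
        rw [show q + 1 + 2 = q + 3 from by omega] at hs1
        by_contra hcon
        push_neg at hcon
        have hs0 := hstep q (by omega)
        have hm2 := hmono (q+2) (by omega)
        rw [show q + 2 + 1 = q + 3 from by omega] at hm2
        have h23' : q + 3 ≤ 2*m := by omega
        exact hext ⟨h23', by omega, by omega⟩

lemma aux_srunDown (hstep : ∀ i, i + 2 ≤ 2*m → a i + 2 ≤ a (i+2)) (hmono : DistC m a) :
    ∀ e, e % 2 = 1 → e ≤ 2*m → a e = a (e-1) →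
    ∃ p, p % 2 = 0 ∧ p < e ∧
      (∀ i, p ≤ i → i ≤ e → a i = a p + 2*((i-p)/2)) ∧
      (1 < p → a (p-2) + 2 < a p) := by
  intro e
  induction e using Nat.strong_induction_on with
  | _ e ih =>
    intro heo he2 hef
    by_cases hext : 2 < e ∧ a (e-2) + 2 = a (e-1) ∧ a (e-3) = a (e-2)
    · obtain ⟨hx1, hx2, hx3⟩ := hext
      obtain ⟨p, hp1, hp2, hp3, hp4⟩ := ih (e-2) (by omega) (by omega) (by omega)
        (by rw [show e - 2 - 1 = e - 3 from by omega]; omega)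
      refine ⟨p, hp1, by omega, ?_, hp4⟩
      intro i h1 h2
      rcases Nat.lt_or_ge (e-2) i with h | h
      · -- i = e-1 or e
        have hd := hp3 (e-2) (by omega) (le_refl _)
        have : i = e - 1 ∨ i = e := by omega
        rcases this with rfl | rfl
        · omega
        · omega
      · exact hp3 i h1 h
    · refine ⟨e-1, by omega, by omega, ?_, ?_⟩
      · intro i h1 h2
        have hc : i = e - 1 ∨ i = e := by omega
        rcases hc with h | h
        · rw [h]; simp
        · rw [h, hef, show e - (e-1) = 1 from by omega]
          simp
      · intro hp1
        rw [show e - 1 - 2 = e - 3 from by omega]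
        by_contra hcon
        push_neg at hcon
        have hs1 := hstep (e-3) (by omega)
        rw [show e - 3 + 2 = e - 1 from by omega] at hs1
        have hs2 := hstep (e-2) (by omega)
        rw [show e - 2 + 2 = e from by omega] at hs2
        have hm1 := hmono (e-3) (by omega)
        rw [show e - 3 + 1 = e - 2 from by omega] at hm1
        have hm2 := hmono (e-2) (by omega)
        rw [show e - 2 + 1 = e - 1 from by omega] at hm2
        exact hext ⟨by omega, by omega, by omega⟩

end Aux8
section Aux9

variable {m : ℕ} {a : ℕ → ℕ}

lemma aux_up (hstep : ∀ i, i + 2 ≤ 2*m → a i + 2 ≤ a (i+2)) (hmono : DistC m a) :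
    ∀ f q, 2*m - q ≤ f → q % 2 = 0 → q ≤ 2*m →
    (0 < q → a (q-1) + 2 ≤ a q) →
    (0 < q → q < 2*m → a (q+1) = a q → a (q-2) + 2 < a q) →
    ∃ l, q ≤ l ∧ l ≤ 2*m ∧ ChainFromC m a q l := by
  intro f
  induction f with
  | zero =>
    intro q hf hqe hq2 hpre1 hpre2
    have hq2m : q = 2*m := by omega
    refine ⟨q, le_refl _, by omega, aux_chainSingle ?_ hqe hqe⟩
    exact ⟨le_refl _, by omega, fun j h1 h2 => by rw [show j = q from by omega]; omega,
      fun h => by have := hpre1 h; omega, fun h => by omega⟩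
  | succ f ih =>
    intro q hf hqe hq2 hpre1 hpre2
    rcases Nat.eq_or_lt_of_le hq2 with hq2m | hq2m
    · refine ⟨q, le_refl _, by omega, aux_chainSingle ?_ hqe hqe⟩
      exact ⟨le_refl _, by omega, fun j h1 h2 => by rw [show j = q from by omega]; omega,
        fun h => by have := hpre1 h; omega, fun h => by omega⟩
    · have hq1le := hmono q (by omega)
      rcases Nat.lt_or_ge (a (q+1)) (a q + 1) with hflat | hge
      · -- a (q+1) = a q : staircase
        have hflat' : a (q+1) = a q := by omega
        obtain ⟨e, he1, he2, he3, he4, he5⟩ :=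
          aux_srunUp hstep hmono (2*m) q (by omega) hqe (by omega) hflat'
        have heq1 : a e = a (e-1) := by
          have p1 := he4 e (by omega) (le_refl _)
          have p2 := he4 (e-1) (by omega) (by omega)
          omega
        have hstair : IsStairC m a q e := by
          refine ⟨by omega, he3, by omega, he4, ?_, he5⟩
          intro hq1'
          exact hpre2 (by omega) (by omega) hflat'
        obtain ⟨l, hl1, hl2, hch⟩ := ih (e+1) (by omega) (by omega) (by omega)
          (fun _ => by
            have hs := hstep (e-1) (by omega)
            rw [show e - 1 + 2 = e + 1 from by omega] at hs
            rw [show e + 1 - 1 = e from by omega]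
            omega)
          (fun _ hlt hfl => by
            have := he5 (by omega)
            rw [show e + 1 + 1 = e + 2 from by omega] at hfl
            rw [show e + 1 - 2 = e - 1 from by omega]
            omega)
        exact ⟨l, by omega, hl2, aux_chainCons (Or.inr hstair) (by omega) hqe (by omega) hch⟩
      · rcases Nat.eq_or_lt_of_le hge with hone | hgap
        · -- a (q+1) = a q + 1 : ladder run
          obtain ⟨e, he1, he2, he3, he4⟩ :=
            aux_lrunUp hstep hmono (2*m) q (by omega) (by omega) hone.symm
          have hlad : IsLadderC m a q e := by
            refine ⟨by omega, he2, fun j hj1 hj2 => aux_runpat he3 j hj1 hj2, ?_, ?_⟩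
            · intro h; have := hpre1 h; omega
            · intro h
              rcases he4 with h' | h'
              · omega
              · omega
          rcases Nat.even_or_odd e with hee | heo
          · exact ⟨e, by omega, by omega, aux_chainSingle hlad hqe (Nat.even_iff.mp hee)⟩
          · have heo' : e % 2 = 1 := Nat.odd_iff.mp heo
            have hgap' : a e + 2 ≤ a (e+1) := by
              rcases he4 with h' | h'
              · omega
              · omega
            obtain ⟨l, hl1, hl2, hch⟩ := ih (e+1) (by omega) (by omega) (by omega)
              (fun _ => by rw [show e + 1 - 1 = e from by omega]; omega)
              (fun _ hlt hfl => by
                rw [show e + 1 + 1 = e + 2 from by omega] at hfl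
                rw [show e + 1 - 2 = e - 1 from by omega]
                have hp1 := aux_runpat he3 e (by omega) (le_refl _)
                have hp2 := aux_runpat he3 (e-1) (by omega) (by omega)
                omega)
            exact ⟨l, by omega, hl2, aux_chainCons (Or.inl hlad) (by omega) hqe heo' hch⟩
        · -- a (q+1) ≥ a q + 2 : singleton ladder
          refine ⟨q, le_refl _, by omega, aux_chainSingle ?_ hqe hqe⟩
          exact ⟨le_refl _, by omega, fun j h1 h2 => by rw [show j = q from by omega]; omega,
            fun h => by have := hpre1 h; omega, fun h => by omega⟩

lemma aux_down (hstep : ∀ i, i + 2 ≤ 2*m → a i + 2 ≤ a (i+2)) (hmono : DistC m a) :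
    ∀ q, q % 2 = 0 → q ≤ 2*m →
    (0 < q → a (q-1) + 2 ≤ a q) →
    (1 < q → q < 2*m → a (q-1) = a (q-2) → a (q-1) + 2 < a (q+1)) →
    ∀ l, ChainFromC m a q l → ∃ k, k ≤ q ∧ IsBlockC m a k l := by
  intro q
  induction q using Nat.strong_induction_on with
  | _ q ih =>
    intro hqe hq2 hpre1 hpre2 l hch
    rcases Nat.eq_or_lt_of_le (Nat.zero_le q) with hq0 | hq0
    · exact ⟨0, by omega, Or.inr ⟨rfl, aux_chainTop (by rw [← hq0] at hch; exact hch)⟩⟩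
    · have hq2' : 2 ≤ q := by omega
      have hm := hmono (q-2) (by omega)
      rw [show q - 2 + 1 = q - 1 from by omega] at hm
      rcases Nat.lt_or_ge (a (q-2) + 1) (a (q-1)) with hgap | hle2
      · -- singleton ladder [q-1, q-1]
        have hlad : IsLadderC m a (q-1) (q-1) := by
          refine ⟨le_refl _, by omega, fun j h1 h2 => by rw [show j = q-1 from by omega]; omega,
            ?_, ?_⟩
          · intro h; rw [show q - 1 - 1 = q - 2 from by omega]; omega
          · intro h; rw [show q - 1 + 1 = q from by omega]; have := hpre1 (by omega); omega
        exact ⟨q-1, by omega,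
          Or.inl (aux_blockBotCons hlad (by omega) (by omega) (by omega) hch)⟩
      · rcases Nat.eq_or_lt_of_le hle2 with hone | hflat'
        · -- run of ones down from q-1
          obtain ⟨p, hp1, hp2, hp3⟩ := aux_lrunDown hstep hmono (q-1) (by omega) (by omega)
            (by rw [show q - 1 - 1 = q - 2 from by omega]; omega)
          have hlad : IsLadderC m a p (q-1) := by
            refine ⟨by omega, by omega, fun j h1 h2 => aux_runpat hp2 j h1 h2, ?_, ?_⟩
            · intro h
              rcases hp3 with h' | h'
              · omega
              · omega
            · intro h; rw [show q - 1 + 1 = q from by omega]; have := hpre1 (by omega); omega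
          rcases Nat.even_or_odd p with hpe | hpo
          · -- p even : continue down
            have hpe' : p % 2 = 0 := Nat.even_iff.mp hpe
            have hch' : ChainFromC m a p l :=
              aux_chainCons (Or.inl hlad) (by omega) hpe' (by omega) hch
            obtain ⟨k, hk1, hk2⟩ := ih p (by omega) hpe' (by omega)
              (fun h => by
                rcases hp3 with h' | h'
                · omega
                · omega)
              (fun hp1' hpm hfl => by
                have hs := hp2 p (le_refl _) (by omega)
                rcases hp3 with h' | h'
                · omega
                · omega)
              l hch'
            exact ⟨k, by omega, hk2⟩
          · exact ⟨p, by omega,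
              Or.inl (aux_blockBotCons hlad (by omega) (Nat.odd_iff.mp hpo) (by omega) hch)⟩
        · -- a (q-1) = a (q-2) : staircase down
          have hflat : a (q-1) = a (q-2) := by omega
          obtain ⟨p, hp1, hp2, hp3, hp4⟩ := aux_srunDown hstep hmono (q-1) (by omega) (by omega)
            (by rw [show q - 1 - 1 = q - 2 from by omega]; omega)
          have hstair : IsStairC m a p (q-1) := by
            refine ⟨by omega, by omega, by omega, hp3, hp4, ?_⟩
            intro h
            rw [show q - 1 + 2 = q + 1 from by omega]
            exact hpre2 (by omega) (by omega) hflat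
          have hflatp : a (p+1) = a p := by
            have := hp3 (p+1) (by omega) (by omega)
            rw [show p + 1 - p = 1 from by omega] at this
            omega
          have hch' : ChainFromC m a p l :=
            aux_chainCons (Or.inr hstair) (by omega) hp1 (by omega) hch
          obtain ⟨k, hk1, hk2⟩ := ih p (by omega) hp1 (by omega)
            (fun h => by
              have hs := hstep (p-1) (by omega)
              rw [show p - 1 + 2 = p + 1 from by omega] at hs
              omega)
            (fun hp1' hpm hfl => by
              have := hp4 hp1'
              omega)
            l hch'
          exact ⟨k, by omega, hk2⟩

end Aux9
section Aux10

variable {m : ℕ} {a : ℕ → ℕ}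

lemma aux_partAround (h1 : 1 ≤ a 1) (hstep : ∀ i, i + 2 ≤ 2*m → a i + 2 ≤ a (i+2))
    (hmono : DistC m a) {j : ℕ} (hiso : IsIsolC m a j) :
    ∃ p e, p ≤ j ∧ j ≤ e ∧ (IsLadderC m a p e ∨ (IsStairC m a p e ∧ p % 2 = 0)) := by
  have hj2 := hiso.1
  rcases Nat.even_or_odd j with hje | hjo
  · -- j even
    have hje' : j % 2 = 0 := Nat.even_iff.mp hje
    by_cases hA : j < 2*m ∧ a (j+1) = a j
    · -- staircase around j
      obtain ⟨e, heo, hje2, he2, hupat, htop⟩ :=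
        aux_srunUp hstep hmono (2*m) j (by omega) hje' hA.1 hA.2
      obtain ⟨p, hpe, hpj, hdpat, hbot⟩ :=
        aux_srunDown hstep hmono (j+1) (by omega) (by omega)
          (by rw [show j + 1 - 1 = j from by omega]; exact hA.2)
      have hpat := aux_stairGlue (jj := j) (by omega) (by omega) hdpat hupat
      exact ⟨p, e, by omega, by omega, Or.inr ⟨⟨by omega, he2, by omega, hpat, hbot, htop⟩, hpe⟩⟩
    · by_cases hB : 0 < j ∧ a j = a (j-1) + 1
      · obtain ⟨p, hp1, hp2, hp3⟩ := aux_lrunDown hstep hmono j hB.1 hj2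
          (by rw [show j - 1 = j - 1 from rfl]; exact hB.2)
        by_cases hC : j < 2*m ∧ a (j+1) = a j + 1
        · obtain ⟨e, he1, he2, he3, he4⟩ := aux_lrunUp hstep hmono (2*m) j (by omega) hC.1 hC.2
          have hrun : ∀ i, p ≤ i → i < e → a (i+1) = a i + 1 := by
            intro i hi1 hi2
            rcases Nat.lt_or_ge i j with h | h
            · exact hp2 i hi1 h
            · exact he3 i h hi2
          refine ⟨p, e, by omega, by omega, Or.inl ?_⟩
          refine ⟨by omega, he2, fun i hi1 hi2 => aux_runpat hrun i hi1 hi2, ?_, ?_⟩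
          · intro h; rcases hp3 with h' | h'
            · omega
            · omega
          · intro h; rcases he4 with h' | h'
            · omega
            · omega
        · refine ⟨p, j, by omega, le_refl _, Or.inl ?_⟩
          refine ⟨by omega, hj2, fun i hi1 hi2 => aux_runpat hp2 i hi1 hi2, ?_, ?_⟩
          · intro h; rcases hp3 with h' | h'
            · omega
            · omega
          · intro h
            have hm1 := hmono j (by omega)
            have hA' : a (j+1) ≠ a j := fun hf => hA ⟨h, hf⟩
            have hC' : a (j+1) ≠ a j + 1 := fun hf => hC ⟨h, hf⟩
            omega
      · -- j is not in a run below
        have hnb : 0 < j → a (j-1) + 2 ≤ a j := by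
          intro h
          have hm1 := hmono (j-1) (by omega)
          rw [show j - 1 + 1 = j from by omega] at hm1
          have hB' : a j ≠ a (j-1) + 1 := fun hf => hB ⟨h, hf⟩
          have hflat : a j ≠ a (j-1) := by
            intro hf
            refine (hiso.2 (j-1) (by omega) (by omega)) ?_
            simp only [mapC]; omega
          omega
        by_cases hC : j < 2*m ∧ a (j+1) = a j + 1
        · obtain ⟨e, he1, he2, he3, he4⟩ := aux_lrunUp hstep hmono (2*m) j (by omega) hC.1 hC.2
          refine ⟨j, e, le_refl _, by omega, Or.inl ?_⟩
          refine ⟨by omega, he2, fun i hi1 hi2 => aux_runpat he3 i hi1 hi2, ?_, ?_⟩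
          · intro h; have := hnb h; omega
          · intro h; rcases he4 with h' | h'
            · omega
            · omega
        · refine ⟨j, j, le_refl _, le_refl _, Or.inl ?_⟩
          refine ⟨le_refl _, hj2, fun i hi1 hi2 => by rw [show i = j from by omega]; omega,
            ?_, ?_⟩
          · intro h; have := hnb h; omega
          · intro h
            have hm1 := hmono j (by omega)
            have hA' : a (j+1) ≠ a j := fun hf => hA ⟨h, hf⟩
            have hC' : a (j+1) ≠ a j + 1 := fun hf => hC ⟨h, hf⟩
            omega
  · -- j odd
    have hjo' : j % 2 = 1 := Nat.odd_iff.mp hjo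
    have hjlt : j < 2*m := by omega
    by_cases hA : a j = a (j-1)
    · -- staircase
      obtain ⟨p, hpe, hpj, hdpat, hbot⟩ := aux_srunDown hstep hmono j hjo' hj2 hA
      obtain ⟨e, heo, he1, he2, hupat, htop⟩ :=
        aux_srunUp hstep hmono (2*m) (j-1) (by omega) (by omega) (by omega)
          (by rw [show j - 1 + 1 = j from by omega]; omega)
      have hdpat' : ∀ i, p ≤ i → i ≤ (j-1) + 1 → a i = a p + 2*((i-p)/2) := by
        intro i hi1 hi2
        exact hdpat i hi1 (by omega)
      have hpat := aux_stairGlue (jj := j-1) (by omega) (by omega) hdpat' hupat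
      exact ⟨p, e, by omega, by omega, Or.inr ⟨⟨by omega, he2, by omega, hpat, hbot, htop⟩, hpe⟩⟩
    · have hB : a j ≠ a (j-1) + 1 := by
        intro hf
        refine (hiso.2 (j-1) (by omega) (by omega)) ?_
        simp only [mapC]; omega
      have hm1 := hmono (j-1) (by omega)
      rw [show j - 1 + 1 = j from by omega] at hm1
      have hnb : a (j-1) + 2 ≤ a j := by omega
      have hC : a (j+1) ≠ a j := by
        intro hf
        refine (hiso.2 (j+1) (by omega) (by omega)) ?_
        simp only [mapC]; omega
      have hm2 := hmono j (by omega)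
      by_cases hD : a (j+1) = a j + 1
      · obtain ⟨e, he1, he2, he3, he4⟩ := aux_lrunUp hstep hmono (2*m) j (by omega) hjlt hD
        refine ⟨j, e, le_refl _, by omega, Or.inl ?_⟩
        refine ⟨by omega, he2, fun i hi1 hi2 => aux_runpat he3 i hi1 hi2, ?_, ?_⟩
        · intro h; omega
        · intro h; rcases he4 with h' | h'
          · omega
          · omega
      · refine ⟨j, j, le_refl _, le_refl _, Or.inl ?_⟩
        exact ⟨le_refl _, hj2, fun i hi1 hi2 => by rw [show i = j from by omega]; omega,
          fun h => by omega, fun h => by omega⟩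

lemma aux_coverage (h1 : 1 ≤ a 1) (hstep : ∀ i, i + 2 ≤ 2*m → a i + 2 ≤ a (i+2))
    (hmono : DistC m a) {j : ℕ} (hiso : IsIsolC m a j) :
    ∃ k l, IsBlockC m a k l ∧ k ≤ j ∧ j ≤ l := by
  obtain ⟨p, e, hpj, hje, hpart⟩ := aux_partAround h1 hstep hmono hiso
  rcases hpart with hlad | ⟨hstair, hpe⟩
  · obtain ⟨hpe', he2, hpat, hbot, htop⟩ := id hlad
    rcases Nat.even_or_odd p with hpev | hpod
    · -- p even: build chain upward then go down
      have hpev' : p % 2 = 0 := Nat.even_iff.mp hpev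
      have hchain : ∃ l, e ≤ l ∧ l ≤ 2*m ∧ ChainFromC m a p l := by
        rcases Nat.even_or_odd e with heev | heod
        · exact ⟨e, le_refl _, he2, aux_chainSingle hlad hpev' (Nat.even_iff.mp heev)⟩
        · have heod' : e % 2 = 1 := Nat.odd_iff.mp heod
          have hgap : a e + 2 ≤ a (e+1) := by
            have := htop (by omega)
            omega
          obtain ⟨l, hl1, hl2, hch⟩ := aux_up hstep hmono (2*m) (e+1) (by omega) (by omega)
            (by omega)
            (fun _ => by rw [show e + 1 - 1 = e from by omega]; omega)
            (fun _ hlt hfl => by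
              rw [show e + 1 + 1 = e + 2 from by omega] at hfl
              rw [show e + 1 - 2 = e - 1 from by omega]
              rcases Nat.eq_or_lt_of_le hpe' with hpe2 | hpe2
              · -- p = e : singleton
                have hb := hbot (by omega)
                rw [hpe2] at hb
                omega
              · have q1 := hpat e hpe' (le_refl _)
                have q2 := hpat (e-1) (by omega) (by omega)
                omega)
          exact ⟨l, by omega, hl2, aux_chainCons (Or.inl hlad) (by omega) hpev' heod' hch⟩
      obtain ⟨l, hel, hl2, hch⟩ := hchain
      obtain ⟨k, hk1, hk2⟩ := aux_down hstep hmono p hpev' (by omega)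
        (fun h => by have := hbot h; omega)
        (fun hp1 hpm hfl => by
          rcases Nat.eq_or_lt_of_le hpe' with hpe2 | hpe2
          · have ht := htop (by omega)
            rw [← hpe2] at ht
            have hb := hbot (by omega)
            omega
          · have q1 := hpat (p+1) (by omega) (by omega)
            rw [show p + 1 - p = 1 from by omega] at q1
            have hb := hbot (by omega)
            omega)
        l hch
      exact ⟨k, l, hk2, by omega, by omega⟩
    · -- p odd : block bottom here
      have hpod' : p % 2 = 1 := Nat.odd_iff.mp hpod
      rcases Nat.even_or_odd e with heev | heod
      · exact ⟨p, e, Or.inl (aux_blockBotSingle hlad hpod' (Nat.even_iff.mp heev)), hpj, hje⟩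
      · have heod' : e % 2 = 1 := Nat.odd_iff.mp heod
        have hgap : a e + 2 ≤ a (e+1) := by
          have := htop (by omega)
          omega
        obtain ⟨l, hl1, hl2, hch⟩ := aux_up hstep hmono (2*m) (e+1) (by omega) (by omega)
          (by omega)
          (fun _ => by rw [show e + 1 - 1 = e from by omega]; omega)
          (fun _ hlt hfl => by
            rw [show e + 1 + 1 = e + 2 from by omega] at hfl
            rw [show e + 1 - 2 = e - 1 from by omega]
            rcases Nat.eq_or_lt_of_le hpe' with hpe2 | hpe2
            · have hb := hbot (by omega)
              rw [hpe2] at hb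
              omega
            · have q1 := hpat e hpe' (le_refl _)
              have q2 := hpat (e-1) (by omega) (by omega)
              omega)
        exact ⟨p, l, Or.inl (aux_blockBotCons hlad (by omega) hpod' heod' hch), hpj, by omega⟩
  · -- staircase part
    obtain ⟨hpe', he2, hlen, hpat, hbot, htop⟩ := id hstair
    have heod : e % 2 = 1 := by omega
    have heflat : a e = a (e-1) := by
      have q1 := hpat e hpe' (le_refl _)
      have q2 := hpat (e-1) (by omega) (by omega)
      omega
    have hpflat : a (p+1) = a p := by
      have q1 := hpat (p+1) (by omega) (by omega)
      rw [show p + 1 - p = 1 from by omega] at q1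
      omega
    obtain ⟨l, hl1, hl2, hch⟩ := aux_up hstep hmono (2*m) (e+1) (by omega) (by omega)
      (by omega)
      (fun _ => by
        rw [show e + 1 - 1 = e from by omega]
        have hs := hstep (e-1) (by omega)
        rw [show e - 1 + 2 = e + 1 from by omega] at hs
        omega)
      (fun _ hlt hfl => by
        rw [show e + 1 + 1 = e + 2 from by omega] at hfl
        rw [show e + 1 - 2 = e - 1 from by omega]
        have := htop (by omega)
        omega)
    have hch' : ChainFromC m a p l := aux_chainCons (Or.inr hstair) (by omega) hpe heod hch
    obtain ⟨k, hk1, hk2⟩ := aux_down hstep hmono p hpe (by omega)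
      (fun h => by
        have hs := hstep (p-1) (by omega)
        rw [show p - 1 + 2 = p + 1 from by omega] at hs
        omega)
      (fun hp1 hpm hfl => by
        have := hbot hp1
        omega)
      l hch'
    exact ⟨k, l, hk2, by omega, by omega⟩

end Aux10

/-- For a distinguished type-C u-symbol `a` with isolated points enumerated by
`K` (so `K t` is displaced iff `K t ≢ t (mod 2)`): the top of each block is a
nondisplaced isolated point; the bottom of each block that has a bottom is a
nondisplaced isolated point; every other isolated point in a block is displaced;
each block contains an even number of displaced isolated points; and every
isolated point belongs to some block. -/
theorem stmt10 (n m : ℕ) (hn : 1 ≤ n) (hm : 1 ≤ m) (a : ℕ → ℕ)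
    (ha : IsUSymC n m a) (hdist : DistC m a)
    (N : ℕ) (K : ℕ → ℕ) (hE : EnumC m a N K) :
    (∀ k l, IsBlockC m a k l →
      IsIsolC m a l ∧ ∀ t, t < N → K t = l → K t % 2 = t % 2) ∧
    (∀ k l, IsBlockBotC m a k l →
      IsIsolC m a k ∧ ∀ t, t < N → K t = k → K t % 2 = t % 2) ∧
    (∀ k l, IsBlockBotC m a k l → ∀ j, k ≤ j → j ≤ l → j ≠ k → j ≠ l →
      IsIsolC m a j → ∃ t, t < N ∧ K t = j ∧ K t % 2 ≠ t % 2) ∧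
    (∀ l, IsBlockTopC m a l → ∀ j, j ≤ l → j ≠ l →
      IsIsolC m a j → ∃ t, t < N ∧ K t = j ∧ K t % 2 ≠ t % 2) ∧
    (∀ k l, IsBlockC m a k l →
      Even (((Finset.Icc k l).filter
        (fun j => ∃ t, t < N ∧ K t = j ∧ K t % 2 ≠ t % 2)).card)) ∧
    (∀ j, IsIsolC m a j → ∃ k l, IsBlockC m a k l ∧ k ≤ j ∧ j ≤ l) := by
  obtain ⟨ha1, hstep, _⟩ := ha
  refine ⟨?_, ?_, ?_, ?_, ?_, ?_⟩
  · -- tops of blocks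
    intro k l hb
    rcases hb with hb | ⟨_, hb⟩
    · obtain ⟨_, _, _, _, _, _, hliso, hlnb, _⟩ := aux_blockBot_main ha1 hstep hdist hb
      exact ⟨hliso, fun t ht hKt =>
        (aux_crit ha1 hstep hdist hE hliso ht hKt).mpr hlnb⟩
    · obtain ⟨_, _, hliso, hlnb, _⟩ := aux_blockTop_main ha1 hstep hdist hb
      exact ⟨hliso, fun t ht hKt =>
        (aux_crit ha1 hstep hdist hE hliso ht hKt).mpr hlnb⟩
  · -- bottoms of blocks with a bottom
    intro k l hb
    obtain ⟨_, _, _, _, hkiso, hknb, _⟩ := aux_blockBot_main ha1 hstep hdist hb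
    exact ⟨hkiso, fun t ht hKt =>
      (aux_crit ha1 hstep hdist hE hkiso ht hKt).mpr hknb⟩
  · -- interior of blocks with a bottom
    intro k l hb j hkj hjl hjk hjl' hiso
    obtain ⟨_, _, _, _, _, _, _, _, _, _, hint⟩ := aux_blockBot_main ha1 hstep hdist hb
    have hbad := hint j hkj hjl hjk hjl' hiso
    obtain ⟨t, ht, hKt⟩ := hE.2.1 j hiso
    refine ⟨t, ht, hKt, ?_⟩
    intro heq
    exact ((aux_crit ha1 hstep hdist hE hiso ht hKt).mp heq) hbad
  · -- interior of the bottomless block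
    intro l hb j hjl hjl' hiso
    obtain ⟨_, _, _, _, _, hint⟩ := aux_blockTop_main ha1 hstep hdist hb
    have hbad := hint j hjl hjl' hiso
    obtain ⟨t, ht, hKt⟩ := hE.2.1 j hiso
    refine ⟨t, ht, hKt, ?_⟩
    intro heq
    exact ((aux_crit ha1 hstep hdist hE hiso ht hKt).mp heq) hbad
  · -- evenness
    intro k l hb
    exact aux_block_evenCount ha1 hstep hdist hE hb
  · -- coverage
    intro j hiso
    exact aux_coverage ha1 hstep hdist hiso
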